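/- arXiv:1705.02158 — 9 statements merged into one kernel-verified Lean document; each statement's English description precedes it below -/
import Mathlib

section
/- For the weight-k action of the monoid Σ_0(p) on the Tate algebra T given by (σ ·_k f)(x) = det(σ)^{-k/2}(-cx+a)^k f((dx-b)/(-cx+a)) for σ = [[a,b],[c,d]], the image σ ·_k f is again an element of the Tate algebra, i.e. a power series in Q_p[[x]] whose coefficients tend to 0; in particular the function (dx-b)/(-cx+a) maps Z_p into Z_p and the series substitution converges. -/
open Filter Finset

namespace Stmt3Aux

variable {p : ℕ} [Fact p.Prime]

lemma summable_of_norm_tendsto_zero {F : ℕ → ℚ_[p]}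
    (h : Tendsto (fun n => ‖F n‖) atTop (nhds 0)) : Summable F := by
  apply NonarchimedeanAddGroup.summable_of_tendsto_cofinite_zero
  rw [Nat.cofinite_eq_atTop]
  exact tendsto_zero_iff_norm_tendsto_zero.mpr h

/-- Tate algebra condition: coefficients integral and tending to zero. -/
def IsTate (w : ℕ → ℚ_[p]) : Prop :=
  (∀ m, ‖w m‖ ≤ 1) ∧ Tendsto w atTop (nhds 0)

lemma IsTate.summable {w : ℕ → ℚ_[p]} (hw : IsTate w) {x : ℚ_[p]} (hx : ‖x‖ ≤ 1) :
    Summable (fun m => w m * x ^ m) := by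
  apply summable_of_norm_tendsto_zero
  have h0 : Tendsto (fun m => ‖w m‖) atTop (nhds 0) := by
    simpa using hw.2.norm
  apply squeeze_zero (fun m => norm_nonneg _) _ h0
  intro m
  rw [norm_mul]
  calc ‖w m‖ * ‖x ^ m‖ ≤ ‖w m‖ * 1 := by
        apply mul_le_mul_of_nonneg_left _ (norm_nonneg _)
        calc ‖x ^ m‖ = ‖x‖ ^ m := norm_pow _ _
          _ ≤ 1 := pow_le_one₀ (norm_nonneg _) hx
    _ = ‖w m‖ := mul_one _

/-- Cauchy product of coefficient sequences. -/
noncomputable def conv (w v : ℕ → ℚ_[p]) : ℕ → ℚ_[p] :=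
  fun m => ∑ kl ∈ antidiagonal m, w kl.1 * v kl.2

lemma IsTate.conv {w v : ℕ → ℚ_[p]} (hw : IsTate w) (hv : IsTate v) :
    IsTate (Stmt3Aux.conv w v) := by
  constructor
  · intro m
    apply IsUltrametricDist.norm_sum_le_of_forall_le_of_nonneg zero_le_one
    intro kl _
    rw [norm_mul]
    exact mul_le_one₀ (hw.1 _) (norm_nonneg _) (hv.1 _)
  · rw [NormedAddCommGroup.tendsto_nhds_zero]
    intro ε hε
    obtain ⟨N1, hN1⟩ := eventually_atTop.mp
      ((NormedAddCommGroup.tendsto_nhds_zero.mp hw.2) ε hε)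
    obtain ⟨N2, hN2⟩ := eventually_atTop.mp
      ((NormedAddCommGroup.tendsto_nhds_zero.mp hv.2) ε hε)
    refine eventually_atTop.mpr ⟨N1 + N2, fun m hm => ?_⟩
    have hne : (antidiagonal m).Nonempty := ⟨(0, m), by simp⟩
    refine lt_of_le_of_lt (hne.norm_sum_le_sup'_norm _) ?_
    rw [Finset.sup'_lt_iff]
    intro kl hkl
    rw [Finset.HasAntidiagonal.mem_antidiagonal] at hkl
    rw [norm_mul]
    rcases le_or_gt N1 kl.1 with h | h
    · calc ‖w kl.1‖ * ‖v kl.2‖ ≤ ‖w kl.1‖ * 1 :=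
            mul_le_mul_of_nonneg_left (hv.1 _) (norm_nonneg _)
        _ = ‖w kl.1‖ := mul_one _
        _ < ε := hN1 _ h
    · have h2 : N2 ≤ kl.2 := by omega
      calc ‖w kl.1‖ * ‖v kl.2‖ ≤ 1 * ‖v kl.2‖ :=
            mul_le_mul_of_nonneg_right (hw.1 _) (norm_nonneg _)
        _ = ‖v kl.2‖ := one_mul _
        _ < ε := hN2 _ h2

lemma summable_mul_prod {ι κ : Type*} {F : ι → ℚ_[p]} {G : κ → ℚ_[p]}
    (hF : Summable F) (hG : Summable G) :
    Summable (fun z : ι × κ => F z.1 * G z.2) := by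
  apply NonarchimedeanAddGroup.summable_of_tendsto_cofinite_zero
  rw [NormedAddCommGroup.tendsto_nhds_zero]
  intro ε hε
  obtain ⟨MF, hMF⟩ := hF.tendsto_cofinite_zero.norm.bddAbove_range_of_cofinite
  obtain ⟨MG, hMG⟩ := hG.tendsto_cofinite_zero.norm.bddAbove_range_of_cofinite
  set M : ℝ := max (max MF MG) 0 + 1 with hMdef
  have hMpos : (0:ℝ) < M := by positivity
  have hMF' : ∀ i, ‖F i‖ ≤ M := fun i =>
    le_trans (hMF (Set.mem_range_self i)) (by
      have := le_max_left MF MG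
      have := le_max_left (max MF MG) (0:ℝ)
      simp only [hMdef]; linarith)
  have hMG' : ∀ j, ‖G j‖ ≤ M := fun j =>
    le_trans (hMG (Set.mem_range_self j)) (by
      have := le_max_right MF MG
      have := le_max_left (max MF MG) (0:ℝ)
      simp only [hMdef]; linarith)
  have hεM : 0 < ε / M := by positivity
  have h1 : {i | ¬ ‖F i‖ < ε / M}.Finite := by
    have := (NormedAddCommGroup.tendsto_nhds_zero.mp hF.tendsto_cofinite_zero) (ε / M) hεM
    rwa [eventually_cofinite] at this
  have h2 : {j | ¬ ‖G j‖ < ε / M}.Finite := by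
    have := (NormedAddCommGroup.tendsto_nhds_zero.mp hG.tendsto_cofinite_zero) (ε / M) hεM
    rwa [eventually_cofinite] at this
  rw [eventually_cofinite]
  apply Set.Finite.subset (h1.prod h2)
  intro z hz
  simp only [Set.mem_setOf_eq] at hz
  rw [Set.mem_prod]
  constructor
  · intro hlt
    apply hz
    calc ‖F z.1 * G z.2‖ = ‖F z.1‖ * ‖G z.2‖ := norm_mul _ _
      _ ≤ ‖F z.1‖ * M := mul_le_mul_of_nonneg_left (hMG' _) (norm_nonneg _)
      _ < (ε / M) * M := mul_lt_mul_of_pos_right hlt hMpos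
      _ = ε := div_mul_cancel₀ ε (ne_of_gt hMpos)
  · intro hlt
    apply hz
    calc ‖F z.1 * G z.2‖ = ‖F z.1‖ * ‖G z.2‖ := norm_mul _ _
      _ ≤ M * ‖G z.2‖ := mul_le_mul_of_nonneg_right (hMF' _) (norm_nonneg _)
      _ < M * (ε / M) := mul_lt_mul_of_pos_left hlt hMpos
      _ = ε := mul_div_cancel₀ ε (ne_of_gt hMpos)

lemma tsum_conv {w v : ℕ → ℚ_[p]} (hw : IsTate w) (hv : IsTate v) {x : ℚ_[p]}
    (hx : ‖x‖ ≤ 1) :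
    (∑' m, Stmt3Aux.conv w v m * x ^ m)
      = (∑' m, w m * x ^ m) * (∑' m, v m * x ^ m) := by
  have key := Summable.tsum_mul_tsum_eq_tsum_sum_antidiagonal (f := fun m => w m * x ^ m)
    (g := fun m => v m * x ^ m) (hw.summable hx) (hv.summable hx)
    (summable_mul_prod (F := fun m => w m * x ^ m) (G := fun m => v m * x ^ m)
      (hw.summable hx) (hv.summable hx))
  rw [key]
  apply tsum_congr
  intro m
  rw [Stmt3Aux.conv, Finset.sum_mul]
  apply Finset.sum_congr rfl
  intro kl hkl
  rw [Finset.HasAntidiagonal.mem_antidiagonal] at hkl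
  rw [← hkl, pow_add]
  ring

/-- iterated convolution power -/
noncomputable def convPow (w : ℕ → ℚ_[p]) : ℕ → ℕ → ℚ_[p]
  | 0 => fun m => if m = 0 then 1 else 0
  | n + 1 => Stmt3Aux.conv w (convPow w n)

lemma convPow_zero (w : ℕ → ℚ_[p]) :
    Stmt3Aux.convPow w 0 = fun m => if m = 0 then (1 : ℚ_[p]) else 0 := rfl

lemma convPow_succ (w : ℕ → ℚ_[p]) (n : ℕ) :
    Stmt3Aux.convPow w (n + 1) = Stmt3Aux.conv w (Stmt3Aux.convPow w n) := rfl

lemma isTate_one : IsTate (fun m : ℕ => if m = 0 then (1 : ℚ_[p]) else 0) := by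
  constructor
  · intro m
    by_cases h : m = 0 <;> simp [h]
  · apply Tendsto.congr' _ tendsto_const_nhds
    filter_upwards [eventually_ge_atTop 1] with m hm
    simp [Nat.one_le_iff_ne_zero.mp hm]

lemma IsTate.convPow {w : ℕ → ℚ_[p]} (hw : IsTate w) (n : ℕ) :
    IsTate (Stmt3Aux.convPow w n) := by
  induction n with
  | zero => rw [convPow_zero]; exact isTate_one
  | succ n ih => rw [convPow_succ]; exact hw.conv ih

lemma tsum_convPow {w : ℕ → ℚ_[p]} (hw : IsTate w) {x : ℚ_[p]} (hx : ‖x‖ ≤ 1) (n : ℕ) :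
    (∑' m, Stmt3Aux.convPow w n m * x ^ m) = (∑' m, w m * x ^ m) ^ n := by
  induction n with
  | zero =>
    rw [pow_zero, convPow_zero]
    rw [tsum_eq_single 0 (by intro m hm; simp [hm])]
    simp
  | succ n ih =>
    rw [convPow_succ, tsum_conv hw (hw.convPow n) hx, ih, pow_succ]
    ring

lemma summable_uncurry {F : ℕ → ℚ_[p]} {A : ℕ → ℕ → ℚ_[p]} (hF : Summable F)
    (hA1 : ∀ n m, ‖A n m‖ ≤ 1) (hA2 : ∀ n, Tendsto (A n) atTop (nhds 0)) :
    Summable (Function.uncurry fun n m => F n * A n m) := by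
  apply NonarchimedeanAddGroup.summable_of_tendsto_cofinite_zero
  rw [NormedAddCommGroup.tendsto_nhds_zero]
  intro ε hε
  rw [eventually_cofinite]
  have hFc : {n | ¬ ‖F n‖ < ε}.Finite := by
    have := (NormedAddCommGroup.tendsto_nhds_zero.mp hF.tendsto_cofinite_zero) ε hε
    rwa [eventually_cofinite] at this
  have hAc : ∀ n, {m | ¬ ‖F n * A n m‖ < ε}.Finite := by
    intro n
    have ht : Tendsto (fun m => F n * A n m) atTop (nhds 0) := by
      simpa using (hA2 n).const_mul (F n)
    rw [← Nat.cofinite_eq_atTop] at ht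
    have := (NormedAddCommGroup.tendsto_nhds_zero.mp ht) ε hε
    rwa [eventually_cofinite] at this
  apply Set.Finite.subset
    (Set.Finite.biUnion hFc (fun n _ => ((hAc n).image (fun m => (n, m)))))
  intro z hz
  simp only [Set.mem_setOf_eq, Function.uncurry] at hz
  have hz1 : z.1 ∈ {n | ¬ ‖F n‖ < ε} := by
    simp only [Set.mem_setOf_eq]
    intro hlt
    apply hz
    calc ‖F z.1 * A z.1 z.2‖ = ‖F z.1‖ * ‖A z.1 z.2‖ := norm_mul _ _
      _ ≤ ‖F z.1‖ * 1 := mul_le_mul_of_nonneg_left (hA1 _ _) (norm_nonneg _)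
      _ = ‖F z.1‖ := mul_one _
      _ < ε := hlt
  simp only [Set.mem_iUnion]
  exact ⟨z.1, hz1, ⟨z.2, hz, by simp⟩⟩

end Stmt3Aux


open Stmt3Aux Filter in
/-- for `σ = [[a,b],[c,d]] ∈ Σ₀(p)` (integral entries, `a` a unit, `p ∣ c`,
nonzero determinant) and `f = ∑ f_n x^n` in the Tate algebra (coefficients tending to 0),
the Möbius map `x ↦ (dx-b)/(-cx+a)` sends ℤ_p into ℤ_p, the substituted series converges,
and the weight-`k` image `σ ·_k f` is again given by a Tate series: there is a coefficient
sequence `g` tending to `0` with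
`∑ g_n x^n = det(σ)^{-k/2} (-cx+a)^k f((dx-b)/(-cx+a))` for all `x ∈ ℤ_p`. -/
theorem stmt3 (p k : ℕ) [Fact p.Prime] (hk : Even k)
    (a b c d : ℚ_[p]) (ha : ‖a‖ = 1) (hb : ‖b‖ ≤ 1) (hd : ‖d‖ ≤ 1)
    (hc : ‖c‖ ≤ (p : ℝ)⁻¹) (hdet : a * d - b * c ≠ 0)
    (f : ℕ → ℚ_[p]) (hf : Filter.Tendsto f Filter.atTop (nhds 0)) :
    (∀ x : ℚ_[p], ‖x‖ ≤ 1 → ‖(d * x - b) / (-c * x + a)‖ ≤ 1) ∧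
    (∀ x : ℚ_[p], ‖x‖ ≤ 1 →
      Summable (fun n : ℕ => f n * ((d * x - b) / (-c * x + a)) ^ n)) ∧
    ∃ g : ℕ → ℚ_[p], Filter.Tendsto g Filter.atTop (nhds 0) ∧
      ∀ x : ℚ_[p], ‖x‖ ≤ 1 →
        ∑' n : ℕ, g n * x ^ n =
          ((a * d - b * c)⁻¹) ^ (k / 2) * (-c * x + a) ^ k *
            ∑' n : ℕ, f n * ((d * x - b) / (-c * x + a)) ^ n := by
  have hp1 : (1 : ℝ) < p := by exact_mod_cast Nat.Prime.one_lt (Fact.out : p.Prime)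
  have hcl : ‖c‖ < 1 := lt_of_le_of_lt hc (by
    rw [inv_lt_one₀ (by linarith)]; exact hp1)
  have ha0 : a ≠ 0 := fun h => by simp [h] at ha
  have hainv : ‖a⁻¹‖ = 1 := by rw [norm_inv, ha, inv_one]
  set q : ℚ_[p] := c * a⁻¹ with hqdef
  have hqn : ‖q‖ < 1 := by rw [hqdef, norm_mul, hainv, mul_one]; exact hcl
  have hdenom : ∀ x : ℚ_[p], ‖x‖ ≤ 1 → ‖-c * x + a‖ = 1 := by
    intro x hx
    have h1 : ‖-c * x‖ < ‖a‖ := by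
      rw [ha, norm_mul, norm_neg]
      calc ‖c‖ * ‖x‖ ≤ ‖c‖ * 1 := mul_le_mul_of_nonneg_left hx (norm_nonneg _)
        _ = ‖c‖ := mul_one _
        _ < 1 := hcl
    rw [IsUltrametricDist.norm_add_eq_max_of_norm_ne_norm (ne_of_lt h1),
      max_eq_right (le_of_lt h1), ha]
  have hdn0 : ∀ x : ℚ_[p], ‖x‖ ≤ 1 → (-c * x + a) ≠ 0 := by
    intro x hx h
    have h2 := hdenom x hx
    rw [h, norm_zero] at h2
    norm_num at h2
  have hnum : ∀ x : ℚ_[p], ‖x‖ ≤ 1 → ‖d * x - b‖ ≤ 1 := by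
    intro x hx
    rw [sub_eq_add_neg]
    refine le_trans (IsUltrametricDist.norm_add_le_max _ _) ?_
    rw [max_le_iff]
    refine ⟨?_, by rwa [norm_neg]⟩
    rw [norm_mul]
    exact mul_le_one₀ hd (norm_nonneg _) hx
  have part1 : ∀ x : ℚ_[p], ‖x‖ ≤ 1 → ‖(d * x - b) / (-c * x + a)‖ ≤ 1 := by
    intro x hx
    rw [norm_div, hdenom x hx, div_one]
    exact hnum x hx
  have upow : ∀ x : ℚ_[p], ‖x‖ ≤ 1 → ∀ n : ℕ,
      ‖((d * x - b) / (-c * x + a)) ^ n‖ ≤ 1 := by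
    intro x hx n
    rw [norm_pow]
    exact pow_le_one₀ (norm_nonneg _) (part1 x hx)
  have hfnorm : Tendsto (fun n => ‖f n‖) atTop (nhds 0) := by simpa using hf.norm
  have part2 : ∀ x : ℚ_[p], ‖x‖ ≤ 1 →
      Summable (fun n : ℕ => f n * ((d * x - b) / (-c * x + a)) ^ n) := by
    intro x hx
    apply summable_of_norm_tendsto_zero
    apply squeeze_zero (fun n => norm_nonneg _) _ hfnorm
    intro n
    rw [norm_mul]
    calc ‖f n‖ * ‖((d * x - b) / (-c * x + a)) ^ n‖ ≤ ‖f n‖ * 1 :=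
          mul_le_mul_of_nonneg_left (upow x hx n) (norm_nonneg _)
      _ = ‖f n‖ := mul_one _
  refine ⟨part1, part2, ?_⟩
  -- the coefficient sequences
  set uc : ℕ → ℚ_[p] :=
    fun m => if m = 0 then -b * a⁻¹ else ((d - b * q) * a⁻¹) * q ^ (m - 1) with hucdef
  have hdbq : ‖d - b * q‖ ≤ 1 := by
    rw [sub_eq_add_neg]
    refine le_trans (IsUltrametricDist.norm_add_le_max _ _) ?_
    rw [max_le_iff]
    refine ⟨hd, ?_⟩
    rw [norm_neg, norm_mul]
    exact mul_le_one₀ hb (norm_nonneg _) (le_of_lt hqn)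
  have huc : IsTate uc := by
    constructor
    · intro m
      by_cases h : m = 0
      · simp only [hucdef, h, if_pos rfl]
        rw [norm_mul, norm_neg, hainv, mul_one]
        exact hb
      · simp only [hucdef, if_neg h]
        rw [norm_mul, norm_mul]
        refine mul_le_one₀ (mul_le_one₀ hdbq (norm_nonneg _) (le_of_eq hainv))
          (norm_nonneg _) ?_
        rw [norm_pow]
        exact pow_le_one₀ (norm_nonneg _) (le_of_lt hqn)
    · rw [← tendsto_add_atTop_iff_nat 1]
      have heq : (fun n : ℕ => uc (n + 1)) = fun n => ((d - b * q) * a⁻¹) * q ^ n := by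
        funext n
        simp [hucdef]
      rw [heq]
      simpa using (tendsto_pow_atTop_nhds_zero_of_norm_lt_one hqn).const_mul
        ((d - b * q) * a⁻¹)
  have huc_ev : ∀ x : ℚ_[p], ‖x‖ ≤ 1 →
      (∑' m, uc m * x ^ m) = (d * x - b) / (-c * x + a) := by
    intro x hx
    have hqx : ‖q * x‖ < 1 := by
      rw [norm_mul]
      calc ‖q‖ * ‖x‖ ≤ ‖q‖ * 1 := mul_le_mul_of_nonneg_left hx (norm_nonneg _)
        _ = ‖q‖ := mul_one _
        _ < 1 := hqn
    have h1qx : (1 : ℚ_[p]) - q * x ≠ 0 := by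
      intro h
      rw [sub_eq_zero] at h
      rw [← h] at hqx
      simp at hqx
    rw [Summable.tsum_eq_zero_add (huc.summable hx)]
    have hterm : ∀ m : ℕ, uc (m + 1) * x ^ (m + 1) =
        (((d - b * q) * a⁻¹) * x) * (q * x) ^ m := by
      intro m
      simp only [hucdef, Nat.succ_ne_zero, if_false, Nat.add_sub_cancel]
      ring
    rw [tsum_congr hterm, tsum_mul_left, tsum_geometric_of_norm_lt_one hqx]
    have huc0 : uc 0 = -b * a⁻¹ := by simp [hucdef]
    have hacx : a - c * x ≠ 0 := by
      intro h
      exact hdn0 x hx (by linear_combination h)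
    rw [huc0, hqdef]
    rw [hqdef] at h1qx
    field_simp [ha0, h1qx, hdn0 x hx, hacx]
    rw [eq_div_iff (by intro h; exact hacx (by linear_combination h))]
    ring
  set pc : ℕ → ℚ_[p] :=
    fun m => if m = 0 then a else if m = 1 then -c else 0 with hpcdef
  have hpc : IsTate pc := by
    constructor
    · intro m
      by_cases h0 : m = 0
      · simp only [hpcdef, h0, if_pos rfl]
        exact le_of_eq ha
      · by_cases h1 : m = 1
        · simp only [hpcdef, h1]
          norm_num
          exact le_of_lt hcl
        · simp [hpcdef, h0, h1]
    · apply Tendsto.congr' _ tendsto_const_nhds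
      filter_upwards [eventually_ge_atTop 2] with m hm
      have h0 : m ≠ 0 := by omega
      have h1 : m ≠ 1 := by omega
      simp [hpcdef, h0, h1]
  have hpc_ev : ∀ x : ℚ_[p], ‖x‖ ≤ 1 → (∑' m, pc m * x ^ m) = -c * x + a := by
    intro x hx
    have hz : ∀ m ∉ ({0, 1} : Finset ℕ), pc m * x ^ m = 0 := by
      intro m hm
      simp only [Finset.mem_insert, Finset.mem_singleton] at hm
      push_neg at hm
      simp [hpcdef, hm.1, hm.2]
    rw [tsum_eq_sum hz]
    simp [hpcdef]
    ring
  set D : ℚ_[p] := ((a * d - b * c)⁻¹) ^ (k / 2) with hDdef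
  set V : ℕ → ℕ → ℚ_[p] :=
    fun n => Stmt3Aux.conv (Stmt3Aux.convPow pc k) (Stmt3Aux.convPow uc n) with hVdef
  have hV : ∀ n, IsTate (V n) := fun n => (hpc.convPow k).conv (huc.convPow n)
  have hV_ev : ∀ n : ℕ, ∀ x : ℚ_[p], ‖x‖ ≤ 1 →
      (∑' m, V n m * x ^ m) =
        (-c * x + a) ^ k * ((d * x - b) / (-c * x + a)) ^ n := by
    intro n x hx
    rw [hVdef]
    rw [tsum_conv (hpc.convPow k) (huc.convPow n) hx, tsum_convPow hpc hx k,
      tsum_convPow huc hx n, hpc_ev x hx, huc_ev x hx]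
  have hinner : ∀ m : ℕ, Summable (fun n => f n * V n m) := by
    intro m
    apply summable_of_norm_tendsto_zero
    apply squeeze_zero (fun n => norm_nonneg _) _ hfnorm
    intro n
    rw [norm_mul]
    calc ‖f n‖ * ‖V n m‖ ≤ ‖f n‖ * 1 :=
          mul_le_mul_of_nonneg_left ((hV n).1 m) (norm_nonneg _)
      _ = ‖f n‖ := mul_one _
  refine ⟨fun m => D * ∑' n, f n * V n m, ?_, ?_⟩
  · -- decay of the new coefficients
    rw [NormedAddCommGroup.tendsto_nhds_zero]
    intro ε hε
    have hDnn : (0 : ℝ) ≤ ‖D‖ := norm_nonneg _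
    set ε' : ℝ := ε / (‖D‖ + 1) with hε'def
    have hε' : 0 < ε' := by positivity
    obtain ⟨Mf, hMf⟩ : ∃ Mf : ℝ, ∀ n, ‖f n‖ ≤ Mf := by
      have h := hf
      rw [← Nat.cofinite_eq_atTop] at h
      obtain ⟨Mf, hMf⟩ := h.norm.bddAbove_range_of_cofinite
      exact ⟨Mf, fun n => hMf (Set.mem_range_self n)⟩
    set M : ℝ := max Mf 0 + 1 with hMdef
    have hMpos : (0 : ℝ) < M := by positivity
    have hMn : ∀ n, ‖f n‖ ≤ M := fun n => le_trans (hMf n) (by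
      have := le_max_left Mf (0 : ℝ)
      simp only [hMdef]; linarith)
    obtain ⟨N0, hN0⟩ := eventually_atTop.mp
      ((NormedAddCommGroup.tendsto_nhds_zero.mp hf) ε' hε')
    have hVdecay : ∀ n : ℕ, ∃ Tn : ℕ, ∀ m ≥ Tn, ‖V n m‖ < ε' / M := fun n =>
      eventually_atTop.mp
        ((NormedAddCommGroup.tendsto_nhds_zero.mp (hV n).2) (ε' / M) (by positivity))
    choose T hT using hVdecay
    refine eventually_atTop.mpr ⟨(Finset.range N0).sup T, fun m hm => ?_⟩
    have hbound : ∀ n, ‖f n * V n m‖ ≤ ε' := by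
      intro n
      rcases le_or_gt N0 n with h | h
      · rw [norm_mul]
        calc ‖f n‖ * ‖V n m‖ ≤ ‖f n‖ * 1 :=
              mul_le_mul_of_nonneg_left ((hV n).1 m) (norm_nonneg _)
          _ = ‖f n‖ := mul_one _
          _ ≤ ε' := le_of_lt (hN0 n h)
      · have hTn : T n ≤ m := le_trans (Finset.le_sup (Finset.mem_range.mpr h)) hm
        rw [norm_mul]
        calc ‖f n‖ * ‖V n m‖ ≤ M * (ε' / M) :=
              mul_le_mul (hMn n) (le_of_lt (hT n m hTn)) (norm_nonneg _)
                (le_of_lt hMpos)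
          _ = ε' := mul_div_cancel₀ _ (ne_of_gt hMpos)
    calc ‖D * ∑' n, f n * V n m‖ = ‖D‖ * ‖∑' n, f n * V n m‖ := norm_mul _ _
      _ ≤ ‖D‖ * ε' :=
          mul_le_mul_of_nonneg_left
            (IsUltrametricDist.norm_tsum_le_of_forall_le_of_nonneg (le_of_lt hε')
              hbound) hDnn
      _ < (‖D‖ + 1) * ε' := mul_lt_mul_of_pos_right (by linarith) hε'
      _ = ε := by rw [hε'def]; field_simp
  · -- the evaluation identity
    intro x hx
    have e1 : ∀ m : ℕ, (D * ∑' n, f n * V n m) * x ^ m =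
        D * ∑' n, f n * (V n m * x ^ m) := by
      intro m
      rw [mul_assoc]
      congr 1
      rw [← tsum_mul_right]
      exact tsum_congr fun n => by ring
    rw [tsum_congr e1, tsum_mul_left]
    have hfs : Summable f := summable_of_norm_tendsto_zero hfnorm
    have hA1 : ∀ n m : ℕ, ‖V n m * x ^ m‖ ≤ 1 := by
      intro n m
      rw [norm_mul, norm_pow]
      exact mul_le_one₀ ((hV n).1 m) (pow_nonneg (norm_nonneg _) m)
        (pow_le_one₀ (norm_nonneg _) hx)
    have hA2 : ∀ n : ℕ, Tendsto (fun m => V n m * x ^ m) atTop (nhds 0) := by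
      intro n
      have h0 : Tendsto (fun m => ‖V n m‖) atTop (nhds 0) := by
        simpa using (hV n).2.norm
      rw [tendsto_zero_iff_norm_tendsto_zero]
      apply squeeze_zero (fun m => norm_nonneg _) _ h0
      intro m
      rw [norm_mul, norm_pow]
      calc ‖V n m‖ * ‖x‖ ^ m ≤ ‖V n m‖ * 1 :=
            mul_le_mul_of_nonneg_left (pow_le_one₀ (norm_nonneg _) hx)
              (norm_nonneg _)
        _ = ‖V n m‖ := mul_one _
    have huncurry := summable_uncurry (F := f) (A := fun n m => V n m * x ^ m)
      hfs hA1 hA2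
    have hrow : ∀ n : ℕ, Summable (fun m => f n * (V n m * x ^ m)) := fun n =>
      ((hV n).summable hx).mul_left (f n)
    have hcol : ∀ m : ℕ, Summable (fun n => f n * (V n m * x ^ m)) := by
      intro m
      exact ((hinner m).mul_right (x ^ m)).congr fun n => by ring
    have hswap := Summable.tsum_comm' (f := fun n m => f n * (V n m * x ^ m))
      huncurry hrow hcol
    rw [hswap]
    have e2 : ∀ n : ℕ, (∑' m, f n * (V n m * x ^ m)) =
        (-c * x + a) ^ k * (f n * ((d * x - b) / (-c * x + a)) ^ n) := by
      intro n
      rw [tsum_mul_left, hV_ev n x hx]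
      ring
    rw [tsum_congr e2, tsum_mul_left, ← mul_assoc]
end

section
/- Let D_k(Z_p) be the set of continuous linear functionals ω on the weight-k Tate algebra T_k with ω(x^i) ∈ Z_p for all i ≥ 0, and define the filtration F^0 D_k(Z_p) = {ω : ω(x^i) = 0 for 0 ≤ i ≤ k} and, for n ≥ 1, F^n D_k(Z_p) = {ω ∈ F^0 : ω(x^{k+i}) ∈ p^{n−i+1} Z_p for 1 ≤ i ≤ n}. Then each F^n D_k(Z_p) is stable under the right action of Γ_0(pZ_p). -/
open Filter IsUltrametricDist Finset

noncomputable def Pc {p : ℕ} [Fact p.Prime] (b d : ℚ_[p]) (i r : ℕ) : ℚ_[p] :=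
  if r ≤ i then (i.choose r : ℚ_[p]) * d ^ r * (-b) ^ (i - r) else 0

noncomputable def Gc {p : ℕ} [Fact p.Prime] (k : ℕ) (a c : ℚ_[p]) (i s : ℕ) : ℚ_[p] :=
  if i ≤ k then
    (if s ≤ k - i then (((k - i).choose s : ℚ_[p])) * (-c) ^ s * a ^ (k - i - s) else 0)
  else (a⁻¹) ^ (i - k) * (((s + (i - k - 1)).choose (i - k - 1) : ℚ_[p])) * (c / a) ^ s

noncomputable def coefB {p : ℕ} [Fact p.Prime] (k : ℕ) (a b c d : ℚ_[p]) (i m : ℕ) : ℚ_[p] :=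
  ((a * d - b * c)⁻¹) ^ (k / 2) *
    ∑ rs ∈ Finset.HasAntidiagonal.antidiagonal m, Pc b d i rs.1 * Gc k a c i rs.2

section lems
variable {p : ℕ} [hp : Fact p.Prime] {k : ℕ} {a b c d : ℚ_[p]}

lemma aux_summable (g : ℕ → ℚ_[p]) (hg : Filter.Tendsto g Filter.atTop (nhds 0))
    {x : ℚ_[p]} (hx : ‖x‖ ≤ 1) : Summable (fun m => g m * x ^ m) := by
  apply NonarchimedeanAddGroup.summable_of_tendsto_cofinite_zero
  rw [Nat.cofinite_eq_atTop]
  have h1 : Filter.Tendsto (fun m => ‖g m‖) Filter.atTop (nhds 0) := by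
    simpa using hg.norm
  rw [tendsto_zero_iff_norm_tendsto_zero]
  apply squeeze_zero (fun m => norm_nonneg _) (fun m => ?_) h1
  rw [norm_mul]
  calc ‖g m‖ * ‖x ^ m‖ ≤ ‖g m‖ * 1 := by
        apply mul_le_mul_of_nonneg_left _ (norm_nonneg _)
        rw [norm_pow]; exact pow_le_one₀ (norm_nonneg _) hx
    _ = ‖g m‖ := mul_one _

lemma tate_zero : ∀ (m : ℕ) (g : ℕ → ℚ_[p]), Filter.Tendsto g Filter.atTop (nhds 0) →
    (∀ x : ℚ_[p], ‖x‖ ≤ 1 → x ≠ 0 → ∑' m, g m * x ^ m = 0) → g m = 0 := by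
  have base : ∀ (g : ℕ → ℚ_[p]), Filter.Tendsto g Filter.atTop (nhds 0) →
      (∀ x : ℚ_[p], ‖x‖ ≤ 1 → x ≠ 0 → ∑' m, g m * x ^ m = 0) → g 0 = 0 := by
    intro g hg hz
    obtain ⟨C, hC⟩ : BddAbove (Set.range fun m => ‖g m‖) := by
      have := hg.norm; simp only [norm_zero] at this
      exact this.bddAbove_range
    simp only [mem_upperBounds, Set.mem_range, forall_exists_index] at hC
    have hCm : ∀ m, ‖g m‖ ≤ C := fun m => hC _ m rfl
    have hC0 : (0:ℝ) ≤ C := le_trans (norm_nonneg (g 0)) (hCm 0)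
    have hp1 : (1:ℝ) < p := by exact_mod_cast hp.out.one_lt
    have hkey : ∀ N : ℕ, ‖g 0‖ ≤ C * ((p:ℝ)⁻¹) ^ N := by
      intro N
      set x : ℚ_[p] := (p : ℚ_[p]) ^ N with hxdef
      have hxn : ‖x‖ = ((p:ℝ)⁻¹) ^ N := by
        rw [hxdef, norm_pow, Padic.norm_p]
      have hxle : ‖x‖ ≤ 1 := by
        rw [hxn]; exact pow_le_one₀ (by positivity) (inv_le_one_of_one_le₀ hp1.le)
      have hx0 : x ≠ 0 := by
        apply pow_ne_zero
        exact_mod_cast hp.out.ne_zero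
      have hs : Summable (fun m => g m * x ^ m) := aux_summable g hg hxle
      have h0 := hz x hxle hx0
      rw [Summable.tsum_eq_zero_add hs, pow_zero, mul_one] at h0
      have hg0 : g 0 = - ∑' m, g (m + 1) * x ^ (m + 1) := eq_neg_of_add_eq_zero_left h0
      rw [hg0, norm_neg]
      apply IsUltrametricDist.norm_tsum_le_of_forall_le_of_nonneg (by positivity)
      intro m
      rw [norm_mul, norm_pow, hxn]
      calc ‖g (m+1)‖ * ((p:ℝ)⁻¹ ^ N) ^ (m+1)
          ≤ C * ((p:ℝ)⁻¹ ^ N) ^ (m+1) := by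
            apply mul_le_mul_of_nonneg_right (hCm _) (by positivity)
        _ ≤ C * ((p:ℝ)⁻¹ ^ N) ^ 1 := by
            apply mul_le_mul_of_nonneg_left _ hC0
            apply pow_le_pow_of_le_one (by positivity) _ (by omega)
            rw [hxn] at hxle; exact hxle
        _ = C * ((p:ℝ)⁻¹) ^ N := by ring
    have : Filter.Tendsto (fun N : ℕ => C * ((p:ℝ)⁻¹) ^ N) Filter.atTop (nhds 0) := by
      rw [show (0:ℝ) = C * 0 by ring]
      exact (tendsto_pow_atTop_nhds_zero_of_lt_one (by positivity)
        (inv_lt_one_of_one_lt₀ hp1)).const_mul C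
    have h := ge_of_tendsto' this hkey
    exact norm_eq_zero.mp (le_antisymm h (norm_nonneg _))
  intro m
  induction m with
  | zero => exact fun g hg hz => base g hg hz
  | succ m ih =>
    intro g hg hz
    have hg0 : g 0 = 0 := base g hg hz
    have hshift : ∀ x : ℚ_[p], ‖x‖ ≤ 1 → x ≠ 0 → ∑' m, g (m + 1) * x ^ m = 0 := by
      intro x hx hx0
      have hs : Summable (fun m => g m * x ^ m) := aux_summable g hg hx
      have h0 : ∑' m, g m * x ^ m = 0 := hz x hx hx0
      rw [Summable.tsum_eq_zero_add hs, hg0, zero_mul, zero_add] at h0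
      have heq : ∑' m, g (m + 1) * x ^ m = x⁻¹ * ∑' m, g (m + 1) * x ^ (m + 1) := by
        rw [← tsum_mul_left]
        congr 1; funext m
        field_simp
        ring
      rw [heq, h0, mul_zero]
    exact ih (fun m => g (m + 1)) (hg.comp (tendsto_add_atTop_nat 1)) hshift

lemma norm_nat_le_one (m : ℕ) : ‖(m : ℚ_[p])‖ ≤ 1 := by
  have := Padic.norm_int_le_one (p := p) (m : ℤ)
  rwa [show ((m : ℤ) : ℚ_[p]) = (m : ℚ_[p]) by push_cast; ring] at this

lemma norm_Pc (hb : ‖b‖ ≤ 1) (hd : ‖d‖ ≤ 1) (i r : ℕ) : ‖Pc b d i r‖ ≤ 1 := by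
  unfold Pc
  split
  · rw [norm_mul, norm_mul, norm_pow, norm_pow, norm_neg]
    have h0 := norm_nat_le_one (p := p) (i.choose r)
    have h1 : ‖d‖ ^ r ≤ 1 := pow_le_one₀ (norm_nonneg _) hd
    have h2 : ‖b‖ ^ (i - r) ≤ 1 := pow_le_one₀ (norm_nonneg _) hb
    exact mul_le_one₀ (mul_le_one₀ h0 (by positivity) h1) (by positivity) h2
  · simp

lemma Pc_eq_zero (i r : ℕ) (h : i < r) : Pc b d i r = 0 := by
  unfold Pc; rw [if_neg (by omega)]

lemma norm_Gc (ha1 : ‖a‖ = 1) (i s : ℕ) : ‖Gc k a c i s‖ ≤ ‖c‖ ^ s := by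
  have hcn : (0:ℝ) ≤ ‖c‖ := norm_nonneg _
  unfold Gc
  split
  · split
    · rw [norm_mul, norm_mul, norm_pow, norm_pow, norm_neg, ha1, one_pow, mul_one]
      have := norm_nat_le_one (p := p) ((k - i).choose s)
      nlinarith [pow_nonneg hcn s, norm_nonneg (((k - i).choose s : ℚ_[p]))]
    · rw [norm_zero]; positivity
  · rw [norm_mul, norm_mul, norm_pow, norm_pow, norm_inv, ha1, inv_one, one_pow, one_mul,
      norm_div, ha1, div_one]
    have := norm_nat_le_one (p := p) ((s + (i - k - 1)).choose (i - k - 1))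
    nlinarith [pow_nonneg hcn s]

lemma Gc_eq_zero (i s : ℕ) (hik : i ≤ k) (h : k - i < s) : Gc k a c i s = 0 := by
  unfold Gc; rw [if_pos hik, if_neg (by omega)]

lemma eval_Pc (i : ℕ) (x : ℚ_[p]) : ∑' r, Pc b d i r * x ^ r = (d * x - b) ^ i := by
  rw [tsum_eq_sum (s := Finset.range (i + 1))
    (fun r hr => by rw [Pc_eq_zero i r (by simpa using hr), zero_mul])]
  have : d * x - b = d * x + (-b) := by ring
  rw [this, add_pow]
  apply Finset.sum_congr rfl
  intro r hr
  rw [Finset.mem_range] at hr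
  unfold Pc
  rw [if_pos (by omega)]
  rw [mul_pow]
  ring

lemma eval_Gc_le (i : ℕ) (hik : i ≤ k) (x : ℚ_[p]) :
    ∑' s, Gc k a c i s * x ^ s = (a - c * x) ^ (k - i) := by
  rw [tsum_eq_sum (s := Finset.range (k - i + 1))
    (fun s hs => by
      unfold Gc; rw [if_pos hik, if_neg (by simpa using hs), zero_mul])]
  have : a - c * x = (-c) * x + a := by ring
  rw [this, add_pow]
  apply Finset.sum_congr rfl
  intro s hs
  rw [Finset.mem_range] at hs
  unfold Gc
  rw [if_pos hik, if_pos (by omega), mul_pow]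
  ring

lemma eval_Gc_gt (ha1 : ‖a‖ = 1) (hc : ‖c‖ < 1) (i : ℕ) (hik : k < i) (x : ℚ_[p])
    (hx : ‖x‖ ≤ 1) :
    ∑' s, Gc k a c i s * x ^ s = ((a - c * x)⁻¹) ^ (i - k) := by
  have ha0 : a ≠ 0 := by intro h; rw [h, norm_zero] at ha1; norm_num at ha1
  set t : ℚ_[p] := (c / a) * x with ht
  have htn : ‖t‖ < 1 := by
    rw [ht, norm_mul, norm_div, ha1, div_one]
    calc ‖c‖ * ‖x‖ ≤ ‖c‖ * 1 := mul_le_mul_of_nonneg_left hx (norm_nonneg _)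
      _ = ‖c‖ := mul_one _
      _ < 1 := hc
  set j : ℕ := i - k with hj
  have hj1 : 1 ≤ j := by omega
  have hgeom := hasSum_choose_mul_geometric_of_norm_lt_one (j - 1) htn
  have h1t : (1 : ℚ_[p]) - t ≠ 0 := by
    intro h
    have : (1:ℚ_[p]) = t := by linear_combination h
    rw [← this] at htn; simp at htn
  calc ∑' s, Gc k a c i s * x ^ s
      = ∑' s, (a⁻¹) ^ j * ((((s + (j - 1)).choose (j - 1) : ℚ_[p])) * t ^ s) := by
        apply tsum_congr; intro s
        unfold Gc
        rw [if_neg (by omega), ht, mul_pow]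
        ring
    _ = (a⁻¹) ^ j * (1 / (1 - t) ^ (j - 1 + 1)) := by
        rw [tsum_mul_left, hgeom.tsum_eq]
    _ = ((a - c * x)⁻¹) ^ j := by
        rw [show j - 1 + 1 = j by omega]
        rw [one_div, ← inv_pow, ← mul_pow]
        congr 2
        rw [← mul_inv]
        congr 1
        rw [ht]
        field_simp

lemma pinv_lt_one : ((p : ℝ))⁻¹ < 1 :=
  inv_lt_one_of_one_lt₀ (by exact_mod_cast hp.out.one_lt)

omit hp in
lemma pinv_nonneg' : (0:ℝ) ≤ ((p : ℝ))⁻¹ := by positivity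

lemma norm_detpow (hdet : ‖a * d - b * c‖ = 1) : ‖((a * d - b * c)⁻¹) ^ (k / 2)‖ = 1 := by
  rw [norm_pow, norm_inv, hdet, inv_one, one_pow]

lemma norm_coefB (hb : ‖b‖ ≤ 1) (hd : ‖d‖ ≤ 1) (ha1 : ‖a‖ = 1) (hpc : ‖c‖ ≤ (p:ℝ)⁻¹)
    (hdet : ‖a * d - b * c‖ = 1) (i m : ℕ) :
    ‖coefB k a b c d i m‖ ≤ ((p : ℝ)⁻¹) ^ (m - i) := by
  unfold coefB
  rw [norm_mul, norm_detpow hdet, one_mul]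
  apply IsUltrametricDist.norm_sum_le_of_forall_le_of_nonneg (by positivity)
  rintro ⟨r, s⟩ hrs
  rw [Finset.HasAntidiagonal.mem_antidiagonal] at hrs
  by_cases hri : r ≤ i
  · rw [norm_mul]
    calc ‖Pc b d i r‖ * ‖Gc k a c i s‖ ≤ 1 * ‖c‖ ^ s := by
          apply mul_le_mul (norm_Pc hb hd i r) (norm_Gc ha1 i s) (norm_nonneg _) zero_le_one
      _ = ‖c‖ ^ s := one_mul _
      _ ≤ ((p:ℝ)⁻¹) ^ s := pow_le_pow_left₀ (norm_nonneg _) hpc s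
      _ ≤ ((p:ℝ)⁻¹) ^ (m - i) :=
          pow_le_pow_of_le_one (pinv_nonneg' (p:=p)) pinv_lt_one.le (by omega)
  · rw [Pc_eq_zero i r (by omega), zero_mul, norm_zero]
    positivity

lemma coefB_le_one (hb : ‖b‖ ≤ 1) (hd : ‖d‖ ≤ 1) (ha1 : ‖a‖ = 1) (hpc : ‖c‖ ≤ (p:ℝ)⁻¹)
    (hdet : ‖a * d - b * c‖ = 1) (i m : ℕ) : ‖coefB k a b c d i m‖ ≤ 1 :=
  le_trans (norm_coefB hb hd ha1 hpc hdet i m)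
    (pow_le_one₀ (pinv_nonneg' (p:=p)) pinv_lt_one.le)

lemma coefB_tendsto (hb : ‖b‖ ≤ 1) (hd : ‖d‖ ≤ 1) (ha1 : ‖a‖ = 1) (hpc : ‖c‖ ≤ (p:ℝ)⁻¹)
    (hdet : ‖a * d - b * c‖ = 1) (i : ℕ) :
    Filter.Tendsto (coefB k a b c d i) Filter.atTop (nhds 0) := by
  rw [tendsto_zero_iff_norm_tendsto_zero]
  apply squeeze_zero (fun m => norm_nonneg _) (fun m => norm_coefB hb hd ha1 hpc hdet i m)
  have h1 : Filter.Tendsto (fun t : ℕ => ((p:ℝ)⁻¹) ^ t) Filter.atTop (nhds 0) :=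
    tendsto_pow_atTop_nhds_zero_of_lt_one (pinv_nonneg' (p:=p)) pinv_lt_one
  exact h1.comp (tendsto_sub_atTop_nat i)

lemma coefB_vanish (i m : ℕ) (hik : i ≤ k) (hm : k < m) : coefB k a b c d i m = 0 := by
  unfold coefB
  rw [Finset.sum_eq_zero, mul_zero]
  rintro ⟨r, s⟩ hrs
  rw [Finset.HasAntidiagonal.mem_antidiagonal] at hrs
  by_cases hri : r ≤ i
  · rw [Gc_eq_zero i s hik (by omega), mul_zero]
  · rw [Pc_eq_zero i r (by omega), zero_mul]

lemma summable_norm_Pc (x : ℚ_[p]) (i : ℕ) : Summable fun r => ‖Pc b d i r * x ^ r‖ := by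
  apply summable_of_ne_finset_zero (s := Finset.range (i + 1))
  intro r hr
  rw [Pc_eq_zero i r (by simpa using hr), zero_mul, norm_zero]

lemma summable_norm_Gc (ha1 : ‖a‖ = 1) (hpc : ‖c‖ ≤ (p:ℝ)⁻¹) {x : ℚ_[p]} (hx : ‖x‖ ≤ 1)
    (i : ℕ) : Summable fun s => ‖Gc k a c i s * x ^ s‖ := by
  apply Summable.of_nonneg_of_le (fun s => norm_nonneg _) (fun s => ?_)
    (summable_geometric_of_lt_one (pinv_nonneg' (p:=p)) pinv_lt_one)
  rw [norm_mul]
  calc ‖Gc k a c i s‖ * ‖x ^ s‖ ≤ ‖c‖ ^ s * 1 := by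
        apply mul_le_mul (norm_Gc ha1 i s) _ (norm_nonneg _) (by positivity)
        rw [norm_pow]; exact pow_le_one₀ (norm_nonneg _) hx
    _ = ‖c‖ ^ s := mul_one _
    _ ≤ ((p:ℝ)⁻¹) ^ s := pow_le_pow_left₀ (norm_nonneg _) hpc s

lemma eval_coefB (ha1 : ‖a‖ = 1) (hpc : ‖c‖ ≤ (p:ℝ)⁻¹) (i : ℕ) {x : ℚ_[p]} (hx : ‖x‖ ≤ 1) :
    ∑' m, coefB k a b c d i m * x ^ m =
      ((a * d - b * c)⁻¹) ^ (k / 2) * ((d * x - b) ^ i *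
        (if i ≤ k then (a - c * x) ^ (k - i) else ((a - c * x)⁻¹) ^ (i - k))) := by
  have key : (∑' r, Pc b d i r * x ^ r) * (∑' s, Gc k a c i s * x ^ s) =
      ∑' m, ∑ rs ∈ Finset.HasAntidiagonal.antidiagonal m,
        (Pc b d i rs.1 * x ^ rs.1) * (Gc k a c i rs.2 * x ^ rs.2) :=
    tsum_mul_tsum_eq_tsum_sum_antidiagonal_of_summable_norm
      (summable_norm_Pc x i) (summable_norm_Gc ha1 hpc hx i)
  calc ∑' m, coefB k a b c d i m * x ^ m
      = ((a * d - b * c)⁻¹) ^ (k / 2) *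
          ∑' m, ∑ rs ∈ Finset.HasAntidiagonal.antidiagonal m,
            (Pc b d i rs.1 * x ^ rs.1) * (Gc k a c i rs.2 * x ^ rs.2) := by
        rw [← tsum_mul_left]
        apply tsum_congr; intro m
        unfold coefB
        rw [mul_assoc]
        congr 1
        rw [Finset.sum_mul]
        apply Finset.sum_congr rfl
        rintro ⟨r, s⟩ hrs
        rw [Finset.HasAntidiagonal.mem_antidiagonal] at hrs
        rw [← hrs, pow_add]
        ring
    _ = ((a * d - b * c)⁻¹) ^ (k / 2) *
          ((∑' r, Pc b d i r * x ^ r) * (∑' s, Gc k a c i s * x ^ s)) := by rw [key]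
    _ = _ := by
        rw [eval_Pc]
        congr 2
        split
        · exact eval_Gc_le i (by assumption) x
        · exact eval_Gc_gt ha1 (lt_of_le_of_lt hpc pinv_lt_one) i (by omega) x hx

end lems


/-- stability of the filtration `F^n D_k(ℤ_p)` under the right action of
`Γ₀(pℤ_p)`. A distribution `ω ∈ D_k(ℤ_p)` is encoded by its moment sequence
`μ i = ω(x^i)` (all in ℤ_p); the dual action is `(ω ·_k σ)(x^i) = ω(σ ·_k x^i)`, computed
by pairing the Tate-algebra coefficients `act i` of `σ ·_k x^i` (characterized by the
evaluation identity below) against the moments.  If `μ` satisfies the `F^n` conditions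
(vanishing moments up to `k`, and `ω(x^{k+i}) ∈ p^{n-i+1}ℤ_p` for `1 ≤ i ≤ n`),
then so does `ω ·_k σ`. -/
theorem stmt5 (p k n : ℕ) [Fact p.Prime] (hk : Even k)
    (a b c d : ℚ_[p]) (ha : ‖a‖ ≤ 1) (hb : ‖b‖ ≤ 1) (hcc : ‖c‖ ≤ 1) (hd : ‖d‖ ≤ 1)
    (hdet : ‖a * d - b * c‖ = 1) (hpc : ‖c‖ ≤ (p : ℝ)⁻¹)
    -- `act i` is the coefficient sequence of the Tate series `σ ·_k x^i`
    (act : ℕ → ℕ → ℚ_[p])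
    (hact0 : ∀ i, Filter.Tendsto (act i) Filter.atTop (nhds 0))
    (hact : ∀ i : ℕ, ∀ x : ℚ_[p], ‖x‖ ≤ 1 →
      ∑' m : ℕ, act i m * x ^ m =
        ((a * d - b * c)⁻¹) ^ (k / 2) * (-c * x + a) ^ k *
          ((d * x - b) / (-c * x + a)) ^ i)
    -- the moments of ω, assumed to lie in F^n D_k(ℤ_p)
    (μ : ℕ → ℚ_[p])
    (hμ1 : ∀ i, ‖μ i‖ ≤ 1)
    (hμ2 : ∀ i ≤ k, μ i = 0)
    (hμ3 : ∀ i, 1 ≤ i → i ≤ n → ‖μ (k + i)‖ ≤ (p : ℝ) ^ (-((n : ℤ) - i + 1))) :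
    -- the moments of ω ·_k σ, namely `i ↦ ∑' m, act i m * μ m`, again lie in F^n D_k(ℤ_p)
    (∀ i, ‖∑' m : ℕ, act i m * μ m‖ ≤ 1) ∧
    (∀ i ≤ k, ∑' m : ℕ, act i m * μ m = 0) ∧
    (∀ i, 1 ≤ i → i ≤ n →
      ‖∑' m : ℕ, act (k + i) m * μ m‖ ≤ (p : ℝ) ^ (-((n : ℤ) - i + 1))) := by
  have hp1 : (1:ℝ) < p := by exact_mod_cast (Fact.out : p.Prime).one_lt
  have hpinv1 : ((p:ℝ))⁻¹ < 1 := inv_lt_one_of_one_lt₀ hp1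
  have hc1 : ‖c‖ < 1 := lt_of_le_of_lt hpc hpinv1
  -- norms of a and d are 1
  have hbc : ‖b * c‖ < 1 := by
    rw [norm_mul]
    calc ‖b‖ * ‖c‖ ≤ 1 * ‖c‖ := mul_le_mul_of_nonneg_right hb (norm_nonneg _)
      _ = ‖c‖ := one_mul _
      _ < 1 := hc1
  have had : ‖a * d‖ = 1 := by
    have heq : a * d = (a * d - b * c) + b * c := by ring
    rw [heq, Padic.add_eq_max_of_ne (by rw [hdet]; exact (ne_of_lt hbc).symm), hdet]
    exact sup_eq_left.mpr hbc.le
  have ha1 : ‖a‖ = 1 := by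
    rw [norm_mul] at had
    nlinarith [norm_nonneg a, norm_nonneg d]
  have hd1 : ‖d‖ = 1 := by
    rw [norm_mul] at had
    nlinarith [norm_nonneg a, norm_nonneg d]
  -- identification of act with coefB
  have hae : ∀ i m, act i m = coefB k a b c d i m := by
    intro i m
    have hz : ∀ x : ℚ_[p], ‖x‖ ≤ 1 → x ≠ 0 →
        ∑' m, (act i m - coefB k a b c d i m) * x ^ m = 0 := by
      intro x hx hx0
      have h1 : ∑' m, (act i m - coefB k a b c d i m) * x ^ m =
          (∑' m, act i m * x ^ m) - ∑' m, coefB k a b c d i m * x ^ m := by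
        rw [← Summable.tsum_sub (aux_summable (act i) (hact0 i) hx)
          (aux_summable _ (coefB_tendsto hb hd1.le ha1 hpc hdet i) hx)]
        apply tsum_congr; intro m; ring
      rw [h1, hact i x hx, eval_coefB ha1 hpc i hx]
      -- algebraic identity
      have hvn : ‖a - c * x‖ = 1 := by
        have heq : a - c * x = a + (-(c * x)) := by ring
        have hcx : ‖-(c * x)‖ < 1 := by
          rw [norm_neg, norm_mul]
          calc ‖c‖ * ‖x‖ ≤ ‖c‖ * 1 := mul_le_mul_of_nonneg_left hx (norm_nonneg _)
            _ = ‖c‖ := mul_one _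
            _ < 1 := hc1
        rw [heq, Padic.add_eq_max_of_ne (by rw [ha1]; exact (ne_of_lt hcx).symm), ha1]
        exact sup_eq_left.mpr hcx.le
      have hv0 : a - c * x ≠ 0 := by
        intro h; rw [h, norm_zero] at hvn; norm_num at hvn
      have hveq : -c * x + a = a - c * x := by ring
      rw [hveq, sub_eq_zero]
      rcases le_or_gt i k with hik | hik
      · rw [if_pos hik]
        have hsplit : (a - c * x) ^ k = (a - c * x) ^ i * (a - c * x) ^ (k - i) := by
          rw [← pow_add]; congr 1; omega
        have hvv : (a - c * x) ^ i * ((a - c * x)⁻¹) ^ i = 1 := by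
          rw [← mul_pow, mul_inv_cancel₀ hv0, one_pow]
        rw [hsplit, div_pow, div_eq_mul_inv, ← inv_pow]
        linear_combination (((a * d - b * c)⁻¹) ^ (k / 2) * (d * x - b) ^ i *
          (a - c * x) ^ (k - i)) * hvv
      · rw [if_neg (by omega)]
        have hvvk : (a - c * x) ^ k * ((a - c * x)⁻¹) ^ k = 1 := by
          rw [← mul_pow, mul_inv_cancel₀ hv0, one_pow]
        have hexp : ((d * x - b) / (a - c * x)) ^ i =
            (d * x - b) ^ i * (((a - c * x)⁻¹) ^ k * ((a - c * x)⁻¹) ^ (i - k)) := by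
          rw [← pow_add, show k + (i - k) = i by omega, div_pow, div_eq_mul_inv, ← inv_pow]
        rw [hexp]
        linear_combination (((a * d - b * c)⁻¹) ^ (k / 2) * (d * x - b) ^ i *
          ((a - c * x)⁻¹) ^ (i - k)) * hvvk
    have htd : Filter.Tendsto (fun m => act i m - coefB k a b c d i m) Filter.atTop (nhds 0) := by
      have := (hact0 i).sub (coefB_tendsto (k := k) hb hd1.le ha1 hpc hdet i)
      simpa using this
    have := tate_zero m _ htd hz
    exact sub_eq_zero.mp this
  have hpinv_zpow : ∀ s : ℕ, ((p:ℝ)⁻¹) ^ s = (p:ℝ) ^ (-(s:ℤ)) := by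
    intro s; rw [inv_pow, ← zpow_natCast, ← zpow_neg]
  have hp0 : (p:ℝ) ≠ 0 := by positivity
  refine ⟨?_, ?_, ?_⟩
  · intro i
    apply IsUltrametricDist.norm_tsum_le_of_forall_le_of_nonneg zero_le_one
    intro m
    rw [norm_mul, hae]
    exact mul_le_one₀ (coefB_le_one hb hd1.le ha1 hpc hdet i m) (norm_nonneg _) (hμ1 m)
  · intro i hik
    have hz : ∀ m, act i m * μ m = 0 := by
      intro m
      rcases le_or_gt m k with h | h
      · rw [hμ2 m h, mul_zero]
      · rw [hae, coefB_vanish i m hik h, zero_mul]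
    rw [tsum_congr hz, tsum_zero]
  · intro j hj1 hjn
    apply IsUltrametricDist.norm_tsum_le_of_forall_le_of_nonneg (by positivity)
    intro m
    rcases le_or_gt m k with h | h
    · rw [hμ2 m h, mul_zero, norm_zero]; positivity
    · obtain ⟨t, rfl, ht1⟩ : ∃ t, m = k + t ∧ 1 ≤ t := ⟨m - k, by omega, by omega⟩
      rw [norm_mul, hae]
      have hactb : ‖coefB k a b c d (k + j) (k + t)‖ ≤ (p:ℝ) ^ (-((t - j : ℕ) : ℤ)) := by
        rw [← hpinv_zpow]
        have := norm_coefB (k := k) hb hd1.le ha1 hpc hdet (k + j) (k + t)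
        rwa [show k + t - (k + j) = t - j by omega] at this
      rcases le_or_gt t n with htn | htn
      · have hμb := hμ3 t ht1 htn
        calc ‖coefB k a b c d (k + j) (k + t)‖ * ‖μ (k + t)‖
            ≤ (p:ℝ) ^ (-((t - j : ℕ) : ℤ)) * (p:ℝ) ^ (-((n : ℤ) - t + 1)) := by
              apply mul_le_mul hactb hμb (norm_nonneg _) (by positivity)
          _ = (p:ℝ) ^ (-((t - j : ℕ) : ℤ) + (-((n : ℤ) - t + 1))) := (zpow_add₀ hp0 _ _).symm
          _ ≤ (p:ℝ) ^ (-((n : ℤ) - j + 1)) := by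
              apply zpow_le_zpow_right₀ hp1.le
              rcases le_or_gt j t with hjt | hjt
              · rw [Nat.cast_sub hjt]; push_cast; omega
              · rw [Nat.sub_eq_zero_of_le hjt.le]; push_cast; omega
      · calc ‖coefB k a b c d (k + j) (k + t)‖ * ‖μ (k + t)‖
            ≤ (p:ℝ) ^ (-((t - j : ℕ) : ℤ)) * 1 := by
              apply mul_le_mul hactb (hμ1 _) (norm_nonneg _) (by positivity)
          _ = (p:ℝ) ^ (-((t - j : ℕ) : ℤ)) := mul_one _
          _ ≤ (p:ℝ) ^ (-((n : ℤ) - j + 1)) := by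
              apply zpow_le_zpow_right₀ hp1.le
              have hjt : j ≤ t := by omega
              rw [Nat.cast_sub hjt]; push_cast; omega
end

section
/- The natural map D_k(Z_p) → lim_n D_k(Z_p)/F^n D_k(Z_p) is an isomorphism of Z_p-modules (injective and surjective), where F^n is the filtration by moment conditions. -/
/-- The `F^n`-filtration condition on a distribution in `D_k(ℤ_p)`, encoded by its
moment sequence `μ i = ω(x^i) ∈ ℤ_p`: the moments up to `k` vanish and
`ω(x^{k+i}) ∈ p^{n-i+1} ℤ_p` for `1 ≤ i ≤ n`. -/
def FilCond (p k n : ℕ) [Fact p.Prime] (μ : ℕ → ℤ_[p]) : Prop :=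
  (∀ i ≤ k, μ i = 0) ∧
  ∀ i, 1 ≤ i → i ≤ n → ‖μ (k + i)‖ ≤ (p : ℝ) ^ (-((n : ℤ) - i + 1))

/-- Ultrametric telescoping: if all steps from `N` on have norm `≤ C`, then
`a m - a N` has norm `≤ C` for all `m ≥ N`. -/
lemma tele_bound (p : ℕ) [Fact p.Prime] (a : ℕ → ℤ_[p]) (C : ℝ) (N : ℕ)
    (hstep : ∀ m, N ≤ m → ‖a (m + 1) - a m‖ ≤ C) :
    ∀ m, N ≤ m → ‖a m - a N‖ ≤ C := by
  intro m hm
  induction m, hm using Nat.le_induction with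
  | base =>
    have hC : (0 : ℝ) ≤ C := le_trans (norm_nonneg _) (hstep N le_rfl)
    simpa using hC
  | succ m hm ih =>
    have h1 : a (m + 1) - a N = (a (m + 1) - a m) + (a m - a N) := by ring
    rw [h1]
    exact le_trans (PadicInt.nonarchimedean _ _) (max_le (hstep m hm) ih)

/-- the natural map `D_k(ℤ_p) → lim_n D_k(ℤ_p)/F^n D_k(ℤ_p)` is an
isomorphism.  A distribution in `D_k(ℤ_p)` is (equivalently) its bounded moment sequence
`μ : ℕ → ℤ_p`.  Injectivity: if `μ ∈ F^n` for all `n` then `μ = 0`.  Surjectivity: any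
compatible system of classes, i.e. a sequence of representatives `seq n` with
`seq (n+1) - seq n ∈ F^n`, comes from a single `μ` with `μ - seq n ∈ F^n` for all `n`. -/
theorem stmt7 (p k : ℕ) [Fact p.Prime] (hk : Even k) :
    (∀ μ : ℕ → ℤ_[p], (∀ n, FilCond p k n μ) → μ = 0) ∧
    (∀ seq : ℕ → (ℕ → ℤ_[p]),
      (∀ n, FilCond p k n (fun i => seq (n + 1) i - seq n i)) →
      ∃ μ : ℕ → ℤ_[p], ∀ n, FilCond p k n (fun i => μ i - seq n i)) := by
  have hp1 : (1 : ℝ) < (p : ℝ) := by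
    exact_mod_cast (Fact.out : p.Prime).one_lt
  have hp0 : (0 : ℝ) < (p : ℝ) := lt_trans one_pos hp1
  -- convergence of p^{-m} to 0
  have htend0 : Filter.Tendsto (fun m : ℕ => ((p : ℝ)⁻¹) ^ m) Filter.atTop (nhds 0) :=
    tendsto_pow_atTop_nhds_zero_of_lt_one (inv_nonneg.2 hp0.le)
      ((inv_lt_one_iff₀).2 (Or.inr hp1))
  constructor
  · -- injectivity
    intro μ h
    funext i
    rcases le_or_gt i k with hi | hi
    · exact (h 0).1 i hi
    · -- i = k + j with j ≥ 1
      obtain ⟨j, rfl⟩ : ∃ j, i = k + j := ⟨i - k, by omega⟩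
      have hj : 1 ≤ j := by omega
      have hb : ∀ m : ℕ, ‖μ (k + j)‖ ≤ ((p : ℝ)⁻¹) ^ m := by
        intro m
        have := (h (j + m)).2 j hj (by omega)
        have hexp : -(((j + m : ℕ) : ℤ) - j + 1) ≤ -(m : ℤ) := by
          push_cast; omega
        calc ‖μ (k + j)‖ ≤ (p : ℝ) ^ (-(((j + m : ℕ) : ℤ) - j + 1)) := this
          _ ≤ (p : ℝ) ^ (-(m : ℤ)) := zpow_le_zpow_right₀ hp1.le hexp
          _ = ((p : ℝ)⁻¹) ^ m := by
            rw [zpow_neg, inv_pow, zpow_natCast]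
      have : ‖μ (k + j)‖ ≤ 0 := ge_of_tendsto' htend0 hb
      have : ‖μ (k + j)‖ = 0 := le_antisymm this (norm_nonneg _)
      simpa using this
  · -- surjectivity
    intro seq hseq
    -- the low moments are constant in n
    have hlow : ∀ i ≤ k, ∀ n, seq n i = seq 0 i := by
      intro i hi n
      induction n with
      | zero => rfl
      | succ n ih =>
        have h0 := (hseq n).1 i hi
        have : seq (n + 1) i = seq n i := by
          have := sub_eq_zero.mp h0
          exact this
        rw [this, ih]
    -- step bounds for high moments
    have hstep : ∀ j, 1 ≤ j → ∀ m, j ≤ m →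
        ‖seq (m + 1) (k + j) - seq m (k + j)‖ ≤ (p : ℝ) ^ (-((m : ℤ) - j + 1)) := by
      intro j hj m hm
      exact (hseq m).2 j hj hm
    -- for each j ≥ 1, a limit of the Cauchy sequence n ↦ seq n (k+j)
    have hlim : ∀ j : ℕ, ∃ L : ℤ_[p], 1 ≤ j → ∀ n, j ≤ n →
        ‖L - seq n (k + j)‖ ≤ (p : ℝ) ^ (-((n : ℤ) - j + 1)) := by
      intro j
      rcases Nat.eq_zero_or_pos j with hj0 | hj
      · exact ⟨0, by omega⟩
      set a : ℕ → ℤ_[p] := fun n => seq n (k + j) with ha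
      -- telescoped bounds
      have htel : ∀ N, j ≤ N → ∀ m, N ≤ m →
          ‖a m - a N‖ ≤ (p : ℝ) ^ (-((N : ℤ) - j + 1)) := by
        intro N hN
        apply tele_bound
        intro m hm
        calc ‖a (m + 1) - a m‖ ≤ (p : ℝ) ^ (-((m : ℤ) - j + 1)) :=
              hstep j hj m (le_trans hN hm)
          _ ≤ (p : ℝ) ^ (-((N : ℤ) - j + 1)) := by
              apply zpow_le_zpow_right₀ hp1.le; push_cast; omega
      -- Cauchy sequence
      have hcau : CauchySeq a := by
        refine cauchySeq_of_le_tendsto_0 (s := a)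
          (fun N => (p : ℝ) ^ (-((N : ℤ) - j + 1))) ?_ ?_
        · intro n m N hn hm
          rcases le_or_gt j N with hN | hN
          · have h1 := htel N hN n hn
            have h2 := htel N hN m hm
            have : a n - a m = (a n - a N) + -(a m - a N) := by ring
            rw [dist_eq_norm, this]
            refine le_trans (PadicInt.nonarchimedean _ _) (max_le h1 ?_)
            rwa [norm_neg]
          · -- bound by 1 ≤ p-power with nonnegative exponent
            have h1 : dist (a n) (a m) ≤ 1 := by
              rw [dist_eq_norm]; exact PadicInt.norm_le_one _
            refine le_trans h1 (one_le_zpow₀ hp1.le ?_)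
            omega
        · have heq : (fun N : ℕ => (p : ℝ) ^ (-((N : ℤ) - j + 1)))
              = fun N : ℕ => (p : ℝ) ^ ((j : ℤ) - 1) * ((p : ℝ)⁻¹) ^ N := by
            funext N
            rw [show -((N : ℤ) - j + 1) = ((j : ℤ) - 1) + (-(N : ℤ)) by ring,
              zpow_add₀ (ne_of_gt hp0), zpow_neg, inv_pow, zpow_natCast]
          rw [heq]
          simpa using htend0.const_mul ((p : ℝ) ^ ((j : ℤ) - 1))
      obtain ⟨L, hL⟩ := cauchySeq_tendsto_of_complete hcau
      refine ⟨L, fun _ n hn => ?_⟩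
      have hnorm : Filter.Tendsto (fun m => ‖a m - a n‖) Filter.atTop
          (nhds ‖L - a n‖) := ((hL.sub_const (a n)).norm)
      apply le_of_tendsto hnorm
      filter_upwards [Filter.eventually_atTop.2 ⟨n, fun m hm => hm⟩] with m hm
      exact htel n hn m hm
    choose L hL using hlim
    refine ⟨fun i => if i ≤ k then seq 0 i else L (i - k), fun n => ?_⟩
    constructor
    · intro i hi
      simp only [if_pos hi, hlow i hi n, sub_self]
    · intro i hi hin
      have hik : ¬ (k + i ≤ k) := by omega
      simp only [if_neg hik, Nat.add_sub_cancel_left]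
      exact hL i hi n hin
end

section
/- Let ω be a bounded functional on the Tate algebra with all moments in Z_p (ω ∈ D_k(Z_p)), lying in F^n D_k(Z_p), and let α_j = [[p,j],[0,1]] for 0 ≤ j ≤ p−1. Then ω ·_k α_j^{−1} ∈ F^{n+1} D_k(Z_p). -/
/-- if `ω ∈ F^n D_k(ℤ_p)` (encoded by its moment sequence `μ i = ω(x^i)`),
then `ω ·_k α_j⁻¹ ∈ F^{n+1} D_k(ℤ_p)` for `α_j = [[p,j],[0,1]]`, `0 ≤ j ≤ p-1`.
The dual action on moments is `(ω ·_k α_j⁻¹)(x^i) = p^{-k/2} ∑_{ν=0}^{i} C(i,ν) p^ν j^{i-ν} ω(x^ν)`. -/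
theorem stmt9 (p k n : ℕ) [Fact p.Prime] (hk : Even k) (j : ℕ) (hj : j < p)
    (μ : ℕ → ℚ_[p])
    (hμ1 : ∀ i, ‖μ i‖ ≤ 1)
    (hμ2 : ∀ i ≤ k, μ i = 0)
    (hμ3 : ∀ i, 1 ≤ i → i ≤ n → ‖μ (k + i)‖ ≤ (p : ℝ) ^ (-((n : ℤ) - i + 1))) :
    -- the moments of ω ·_k α_j⁻¹ :
    (∀ i, ‖((p : ℚ_[p]) ^ (k / 2))⁻¹ *
        ∑ ν ∈ Finset.range (i + 1),
          (i.choose ν : ℚ_[p]) * (p : ℚ_[p]) ^ ν * (j : ℚ_[p]) ^ (i - ν) * μ ν‖ ≤ 1) ∧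
    (∀ i ≤ k, ((p : ℚ_[p]) ^ (k / 2))⁻¹ *
        ∑ ν ∈ Finset.range (i + 1),
          (i.choose ν : ℚ_[p]) * (p : ℚ_[p]) ^ ν * (j : ℚ_[p]) ^ (i - ν) * μ ν = 0) ∧
    (∀ i, 1 ≤ i → i ≤ n + 1 →
      ‖((p : ℚ_[p]) ^ (k / 2))⁻¹ *
        ∑ ν ∈ Finset.range (k + i + 1),
          ((k + i).choose ν : ℚ_[p]) * (p : ℚ_[p]) ^ ν * (j : ℚ_[p]) ^ (k + i - ν) * μ ν‖
        ≤ (p : ℝ) ^ (-(((n : ℤ) + 1) - i + 1))) := by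
  have hp1 : (1:ℝ) < p := Nat.one_lt_cast.mpr (Fact.out (p := p.Prime)).one_lt
  have hp0 : (0:ℝ) < p := lt_trans one_pos hp1
  have hkd : k / 2 ≤ k := Nat.div_le_self k 2
  have hnorm_inv : ‖((p : ℚ_[p]) ^ (k / 2))⁻¹‖ = (p:ℝ) ^ ((k/2 : ℕ) : ℤ) := by
    rw [norm_inv, Padic.norm_p_pow, ← zpow_neg, neg_neg]
  have htb : ∀ (c e ν : ℕ), ‖(c:ℚ_[p]) * (p:ℚ_[p])^ν * (j:ℚ_[p])^e * μ ν‖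
      ≤ (p:ℝ)^(-(ν:ℤ)) * ‖μ ν‖ := by
    intro c e ν
    rw [norm_mul, norm_mul, norm_mul, Padic.norm_p_pow, norm_pow]
    have hc : ‖(c:ℚ_[p])‖ ≤ 1 := by
      simpa using Padic.norm_int_le_one (p := p) (c:ℤ)
    have hjn : ‖(j:ℚ_[p])‖ ≤ 1 := by
      simpa using Padic.norm_int_le_one (p := p) (j:ℤ)
    calc ‖(c:ℚ_[p])‖ * (p:ℝ)^(-(ν:ℤ)) * ‖(j:ℚ_[p])‖^e * ‖μ ν‖
        ≤ 1 * (p:ℝ)^(-(ν:ℤ)) * 1^e * ‖μ ν‖ := by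
          gcongr
      _ = (p:ℝ)^(-(ν:ℤ)) * ‖μ ν‖ := by ring
  have hzero : ∀ (c e ν : ℕ), ν ≤ k →
      (c:ℚ_[p]) * (p:ℚ_[p])^ν * (j:ℚ_[p])^e * μ ν = 0 := by
    intro c e ν hν
    rw [hμ2 ν hν, mul_zero]
  refine ⟨?_, ?_, ?_⟩
  · intro i
    rw [norm_mul, hnorm_inv]
    have hsum : ‖∑ ν ∈ Finset.range (i + 1),
        (i.choose ν : ℚ_[p]) * (p:ℚ_[p])^ν * (j:ℚ_[p])^(i-ν) * μ ν‖
        ≤ (p:ℝ)^(-(k:ℤ)-1) := by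
      apply IsUltrametricDist.norm_sum_le_of_forall_le_of_nonneg (by positivity)
      intro ν _
      by_cases hν : ν ≤ k
      · rw [hzero _ _ _ hν, norm_zero]; positivity
      · calc _ ≤ (p:ℝ)^(-(ν:ℤ)) * ‖μ ν‖ := htb _ _ _
          _ ≤ (p:ℝ)^(-(ν:ℤ)) * 1 := by gcongr; exact hμ1 ν
          _ = (p:ℝ)^(-(ν:ℤ)) := mul_one _
          _ ≤ (p:ℝ)^(-(k:ℤ)-1) := zpow_le_zpow_right₀ hp1.le (by omega)
    calc (p:ℝ)^((k/2:ℕ):ℤ) * ‖_‖ ≤ (p:ℝ)^((k/2:ℕ):ℤ) * (p:ℝ)^(-(k:ℤ)-1) := by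
          gcongr
      _ = (p:ℝ)^(((k/2:ℕ):ℤ) + (-(k:ℤ)-1)) := (zpow_add₀ hp0.ne' _ _).symm
      _ ≤ (p:ℝ)^(0:ℤ) := zpow_le_zpow_right₀ hp1.le (by omega)
      _ = 1 := zpow_zero _
  · intro i hi
    rw [Finset.sum_eq_zero, mul_zero]
    intro ν hν
    exact hzero _ _ _ (le_trans (Nat.lt_succ_iff.mp (Finset.mem_range.mp hν)) hi)
  · intro i hi1 hi2
    rw [norm_mul, hnorm_inv]
    have hsum : ‖∑ ν ∈ Finset.range (k + i + 1),
        ((k+i).choose ν : ℚ_[p]) * (p:ℚ_[p])^ν * (j:ℚ_[p])^(k+i-ν) * μ ν‖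
        ≤ (p:ℝ)^(-(k:ℤ)-n-1) := by
      apply IsUltrametricDist.norm_sum_le_of_forall_le_of_nonneg (by positivity)
      intro ν hν
      rw [Finset.mem_range] at hν
      by_cases hνk : ν ≤ k
      · rw [hzero _ _ _ hνk, norm_zero]; positivity
      · obtain ⟨m, rfl⟩ : ∃ m, ν = k + m := ⟨ν - k, by omega⟩
        have hm1 : 1 ≤ m := by omega
        have hmi : m ≤ i := by omega
        by_cases hmn : m ≤ n
        · calc _ ≤ (p:ℝ)^(-((k:ℤ)+m)) * ‖μ (k+m)‖ := by
                have := htb ((k+i).choose (k+m)) (k+i-(k+m)) (k+m)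
                push_cast at this ⊢; exact this
            _ ≤ (p:ℝ)^(-((k:ℤ)+m)) * (p:ℝ)^(-((n:ℤ)-m+1)) := by
                gcongr; exact hμ3 m hm1 hmn
            _ = (p:ℝ)^((-((k:ℤ)+m)) + (-((n:ℤ)-m+1))) := (zpow_add₀ hp0.ne' _ _).symm
            _ ≤ (p:ℝ)^(-(k:ℤ)-n-1) := zpow_le_zpow_right₀ hp1.le (by omega)
        · have hm : m = n + 1 := by omega
          calc _ ≤ (p:ℝ)^(-((k:ℤ)+m)) * ‖μ (k+m)‖ := by
                have := htb ((k+i).choose (k+m)) (k+i-(k+m)) (k+m)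
                push_cast at this ⊢; exact this
            _ ≤ (p:ℝ)^(-((k:ℤ)+m)) * 1 := by gcongr; exact hμ1 _
            _ = (p:ℝ)^(-((k:ℤ)+m)) := mul_one _
            _ ≤ (p:ℝ)^(-(k:ℤ)-n-1) := zpow_le_zpow_right₀ hp1.le (by omega)
    calc (p:ℝ)^((k/2:ℕ):ℤ) * ‖_‖ ≤ (p:ℝ)^((k/2:ℕ):ℤ) * (p:ℝ)^(-(k:ℤ)-n-1) := by
          gcongr
      _ = (p:ℝ)^(((k/2:ℕ):ℤ) + (-(k:ℤ)-n-1)) := (zpow_add₀ hp0.ne' _ _).symm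
      _ ≤ (p:ℝ)^(-(((n:ℤ)+1) - i + 1)) := zpow_le_zpow_right₀ hp1.le (by omega)
end

section
/- Define V_k'(Z_p) = {ω ∈ V_k(Z_p) : ω(x^i) ∈ p^{k/2 − i} Z_p for all 0 ≤ i ≤ k/2}. Then V_k'(Z_p) is stable under the right action of Γ_0(pZ_p) on V_k = Hom(P_k, Q_p). -/
open Polynomial

section aux

variable {p : ℕ} [Fact p.Prime]

lemma coeff_mul_bound' {u v : Polynomial ℚ_[p]} {ε : ℝ} (hε : 0 ≤ ε)
    (hu : ∀ j, ‖u.coeff j‖ ≤ ε ^ j) (hv : ∀ j, ‖v.coeff j‖ ≤ ε ^ j) (j : ℕ) :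
    ‖(u * v).coeff j‖ ≤ ε ^ j := by
  rw [Polynomial.coeff_mul]
  apply IsUltrametricDist.norm_sum_le_of_forall_le_of_nonneg (pow_nonneg hε j)
  intro x hx
  rw [Finset.HasAntidiagonal.mem_antidiagonal] at hx
  calc ‖u.coeff x.1 * v.coeff x.2‖ = ‖u.coeff x.1‖ * ‖v.coeff x.2‖ := norm_mul _ _
    _ ≤ ε ^ x.1 * ε ^ x.2 :=
        mul_le_mul (hu _) (hv _) (norm_nonneg _) (pow_nonneg hε _)
    _ = ε ^ j := by rw [← pow_add, hx]

lemma coeff_pow_bound' {u : Polynomial ℚ_[p]} {ε : ℝ} (hε : 0 ≤ ε)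
    (hu : ∀ j, ‖u.coeff j‖ ≤ ε ^ j) (n : ℕ) : ∀ j, ‖(u ^ n).coeff j‖ ≤ ε ^ j := by
  induction n with
  | zero =>
      intro j
      rcases eq_or_ne j 0 with rfl | hj
      · simp
      · simp [Polynomial.coeff_one, hj, pow_nonneg hε]
  | succ n ih =>
      intro j
      rw [pow_succ]
      exact coeff_mul_bound' hε ih hu j

end aux

set_option maxHeartbeats 1000000 in
/-- `V_k'(ℤ_p) = {ω ∈ V_k(ℤ_p) : ω(x^i) ∈ p^{k/2-i}ℤ_p for i ≤ k/2}` is stable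
under the right action of `Γ₀(pℤ_p)`.  Here `ω ∈ V_k = Hom(P_k, ℚ_p)` is encoded by its
moments `μ i = ω(x^i)` (`0 ≤ i ≤ k`), and the action is
`(ω · σ)(x^i) = ω(σ ·_k x^i)` where `σ ·_k x^i = det(σ)^{-k/2} (dx-b)^i (a-cx)^{k-i}`. -/
theorem stmt10 (p k : ℕ) [Fact p.Prime] (hk : Even k)
    (a b c d : ℚ_[p]) (ha : ‖a‖ ≤ 1) (hb : ‖b‖ ≤ 1) (hcc : ‖c‖ ≤ 1) (hd : ‖d‖ ≤ 1)
    (hdet : ‖a * d - b * c‖ = 1) (hpc : ‖c‖ ≤ (p : ℝ)⁻¹)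
    (μ : ℕ → ℚ_[p])
    (hμ1 : ∀ i ≤ k, ‖μ i‖ ≤ 1)
    (hμ2 : ∀ i ≤ k / 2, ‖μ i‖ ≤ (p : ℝ) ^ (-((k / 2 - i : ℕ) : ℤ))) :
    -- the moments of ω · σ :
    (∀ i ≤ k, ‖∑ ν ∈ Finset.range (k + 1),
        (Polynomial.C (((a * d - b * c)⁻¹) ^ (k / 2)) *
          (Polynomial.C d * Polynomial.X - Polynomial.C b) ^ i *
          (Polynomial.C a - Polynomial.C c * Polynomial.X) ^ (k - i)).coeff ν * μ ν‖ ≤ 1) ∧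
    (∀ i ≤ k / 2, ‖∑ ν ∈ Finset.range (k + 1),
        (Polynomial.C (((a * d - b * c)⁻¹) ^ (k / 2)) *
          (Polynomial.C d * Polynomial.X - Polynomial.C b) ^ i *
          (Polynomial.C a - Polynomial.C c * Polynomial.X) ^ (k - i)).coeff ν * μ ν‖
      ≤ (p : ℝ) ^ (-((k / 2 - i : ℕ) : ℤ))) := by
  have hp1 : (1 : ℝ) ≤ (p : ℝ) := by
    exact_mod_cast Nat.one_le_iff_ne_zero.mpr (Fact.out : p.Prime).ne_zero
  set ε : ℝ := (p : ℝ)⁻¹ with hε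
  have hε0 : 0 ≤ ε := inv_nonneg.mpr (le_trans zero_le_one hp1)
  have hε1 : ε ≤ 1 := inv_le_one_of_one_le₀ hp1
  have hεn : ∀ n : ℕ, (p : ℝ) ^ (-(n : ℤ)) = ε ^ n := by
    intro n; rw [zpow_neg, zpow_natCast, hε, inv_pow]
  set h := k / 2 with hh
  -- norm of the determinant factor
  have hdet' : ‖((a * d - b * c)⁻¹) ^ h‖ = 1 := by
    rw [norm_pow, norm_inv, hdet, inv_one, one_pow]
  -- bound on moments
  have hμ : ∀ ν ≤ k, ‖μ ν‖ ≤ ε ^ (h - ν) := by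
    intro ν hν
    rcases le_or_gt ν h with hνh | hνh
    · have := hμ2 ν hνh; rwa [hεn] at this
    · have : h - ν = 0 := by omega
      rw [this, pow_zero]; exact hμ1 ν hν
  -- the key coefficient bound
  have key : ∀ i ≤ k, ∀ ν,
      ‖(Polynomial.C (((a * d - b * c)⁻¹) ^ h) *
          (Polynomial.C d * Polynomial.X - Polynomial.C b) ^ i *
          (Polynomial.C a - Polynomial.C c * Polynomial.X) ^ (k - i)).coeff ν‖
        ≤ ε ^ (ν - i) := by
    intro i hik ν
    set f : Polynomial ℚ_[p] := (Polynomial.C d * Polynomial.X - Polynomial.C b) ^ i with hf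
    set g : Polynomial ℚ_[p] := (Polynomial.C a - Polynomial.C c * Polynomial.X) ^ (k - i) with hg
    have hfcoeff : ∀ j, ‖f.coeff j‖ ≤ 1 := by
      intro j
      have base : ∀ j, ‖(Polynomial.C d * Polynomial.X - Polynomial.C b).coeff j‖ ≤ (1:ℝ) ^ j := by
        intro j
        match j with
        | 0 => simpa using hb
        | 1 => simpa using hd
        | (n+2) => simp
      simpa using coeff_pow_bound' zero_le_one base i j
    have hgcoeff : ∀ j, ‖g.coeff j‖ ≤ ε ^ j := by
      have base : ∀ j, ‖(Polynomial.C a - Polynomial.C c * Polynomial.X).coeff j‖ ≤ ε ^ j := by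
        intro j
        match j with
        | 0 => simpa using ha
        | 1 => simpa using hpc
        | (n+2) => simpa using pow_nonneg hε0 (n+2)
      exact coeff_pow_bound' hε0 base (k - i)
    have hfdeg : ∀ j, i < j → f.coeff j = 0 := by
      intro j hj
      apply Polynomial.coeff_eq_zero_of_natDegree_lt
      refine lt_of_le_of_lt ?_ hj
      calc f.natDegree ≤ i * (Polynomial.C d * Polynomial.X - Polynomial.C b).natDegree :=
            Polynomial.natDegree_pow_le
        _ ≤ i * 1 := by
            apply Nat.mul_le_mul_left
            refine le_trans (Polynomial.natDegree_sub_le _ _) ?_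
            simp only [max_le_iff, Polynomial.natDegree_C]
            constructor
            · refine le_trans (Polynomial.natDegree_mul_le) ?_
              simp [Polynomial.natDegree_X_le]
            · omega
        _ = i := by omega
    have hmulcoeff : ‖(f * g).coeff ν‖ ≤ ε ^ (ν - i) := by
      rw [Polynomial.coeff_mul]
      apply IsUltrametricDist.norm_sum_le_of_forall_le_of_nonneg (pow_nonneg hε0 _)
      intro x hx
      rw [Finset.HasAntidiagonal.mem_antidiagonal] at hx
      rcases le_or_gt x.1 i with hx1 | hx1
      · calc ‖f.coeff x.1 * g.coeff x.2‖ = ‖f.coeff x.1‖ * ‖g.coeff x.2‖ := norm_mul _ _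
          _ ≤ 1 * ε ^ x.2 :=
              mul_le_mul (hfcoeff _) (hgcoeff _) (norm_nonneg _) zero_le_one
          _ = ε ^ x.2 := one_mul _
          _ ≤ ε ^ (ν - i) := pow_le_pow_of_le_one hε0 hε1 (by omega)
      · rw [hfdeg x.1 hx1, zero_mul, norm_zero]
        exact pow_nonneg hε0 _
    calc ‖(Polynomial.C (((a * d - b * c)⁻¹) ^ h) * f * g).coeff ν‖
        = ‖(Polynomial.C (((a * d - b * c)⁻¹) ^ h) * (f * g)).coeff ν‖ := by rw [mul_assoc]
      _ = ‖((a * d - b * c)⁻¹) ^ h‖ * ‖(f * g).coeff ν‖ := by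
          rw [Polynomial.coeff_C_mul]; exact norm_mul _ _
      _ = ‖(f * g).coeff ν‖ := by rw [hdet', one_mul]
      _ ≤ ε ^ (ν - i) := hmulcoeff
  constructor
  · intro i hik
    apply IsUltrametricDist.norm_sum_le_of_forall_le_of_nonneg zero_le_one
    intro ν hν
    rw [Finset.mem_range] at hν
    calc ‖_ * μ ν‖ = ‖(Polynomial.C (((a * d - b * c)⁻¹) ^ h) *
            (Polynomial.C d * Polynomial.X - Polynomial.C b) ^ i *
            (Polynomial.C a - Polynomial.C c * Polynomial.X) ^ (k - i)).coeff ν‖ * ‖μ ν‖ :=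
          norm_mul _ _
      _ ≤ ε ^ (ν - i) * 1 :=
          mul_le_mul (key i hik ν) (hμ1 ν (by omega)) (norm_nonneg _) (pow_nonneg hε0 _)
      _ ≤ 1 * 1 := by
          apply mul_le_mul_of_nonneg_right _ zero_le_one
          exact pow_le_one₀ hε0 hε1
      _ = 1 := one_mul 1
  · intro i hi
    have hik : i ≤ k := by omega
    rw [hεn]
    apply IsUltrametricDist.norm_sum_le_of_forall_le_of_nonneg (pow_nonneg hε0 _)
    intro ν hν
    rw [Finset.mem_range] at hν
    calc ‖_ * μ ν‖ = ‖(Polynomial.C (((a * d - b * c)⁻¹) ^ h) *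
            (Polynomial.C d * Polynomial.X - Polynomial.C b) ^ i *
            (Polynomial.C a - Polynomial.C c * Polynomial.X) ^ (k - i)).coeff ν‖ * ‖μ ν‖ :=
          norm_mul _ _
      _ ≤ ε ^ (ν - i) * ε ^ (h - ν) :=
          mul_le_mul (key i hik ν) (hμ ν (by omega)) (norm_nonneg _) (pow_nonneg hε0 _)
      _ = ε ^ ((ν - i) + (h - ν)) := (pow_add ε _ _).symm
      _ ≤ ε ^ (h - i) := pow_le_pow_of_le_one hε0 hε1 (by omega)
end

section
/- Let ω ∈ D_k(Z_p) be such that its image π(ω) ∈ V_k lies in V_k'(Z_p), i.e. ω(x^i) ∈ p^{k/2−i} Z_p for 0 ≤ i ≤ k/2 and ω(x^i) ∈ Z_p for all i. Then for each j = 0, …, p−1, the distribution ω ·_k α_j^{−1} (with α_j = [[p,j],[0,1]]) again lies in D_k(Z_p), i.e. all its moments are in Z_p. -/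
/-- if `ω ∈ D_k(ℤ_p)` has specialization in `V_k'(ℤ_p)`, i.e. its moments
`μ i = ω(x^i)` satisfy `μ i ∈ p^{k/2-i} ℤ_p` for `i ≤ k/2` and `μ i ∈ ℤ_p` for all `i`,
then for each `0 ≤ j ≤ p-1` all moments of `ω ·_k α_j⁻¹` (with `α_j = [[p,j],[0,1]]`,
so `(ω ·_k α_j⁻¹)(x^i) = p^{-k/2} ∑_{ν≤i} C(i,ν) p^ν j^{i-ν} μ ν`) lie in ℤ_p. -/
theorem stmt11 (p k : ℕ) [Fact p.Prime] (hk : Even k) (j : ℕ) (hj : j < p)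
    (μ : ℕ → ℚ_[p])
    (hμ1 : ∀ i, ‖μ i‖ ≤ 1)
    (hμ2 : ∀ i ≤ k / 2, ‖μ i‖ ≤ (p : ℝ) ^ (-((k / 2 - i : ℕ) : ℤ))) :
    ∀ i, ‖((p : ℚ_[p]) ^ (k / 2))⁻¹ *
        ∑ ν ∈ Finset.range (i + 1),
          (i.choose ν : ℚ_[p]) * (p : ℚ_[p]) ^ ν * (j : ℚ_[p]) ^ (i - ν) * μ ν‖ ≤ 1 := by
  intro i
  have hp : (1:ℝ) < p := Nat.one_lt_cast.2 (Fact.out : p.Prime).one_lt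
  have hp0 : (0:ℝ) < p := lt_trans one_pos hp
  have hppow : ‖((p : ℚ_[p]) ^ (k / 2))⁻¹‖ = (p:ℝ) ^ (k/2 : ℕ) := by
    rw [norm_inv, norm_pow, Padic.norm_p, ← inv_pow, inv_inv]
  rw [norm_mul, hppow]
  have hsum : ‖∑ ν ∈ Finset.range (i + 1),
      (i.choose ν : ℚ_[p]) * (p : ℚ_[p]) ^ ν * (j : ℚ_[p]) ^ (i - ν) * μ ν‖
      ≤ ((p:ℝ) ^ (k/2 : ℕ))⁻¹ := by
    apply IsUltrametricDist.norm_sum_le_of_forall_le_of_nonneg (by positivity)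
    intro ν _
    have hc : ‖(i.choose ν : ℚ_[p])‖ ≤ 1 := by
      simpa using Padic.norm_int_le_one (p := p) (i.choose ν : ℤ)
    have hj0 : ‖(j : ℚ_[p])‖ ≤ 1 := by
      simpa using Padic.norm_int_le_one (p := p) (j : ℤ)
    have hj' : ‖(j : ℚ_[p]) ^ (i - ν)‖ ≤ 1 := by
      rw [norm_pow]; exact pow_le_one₀ (norm_nonneg _) hj0
    have hpν : ‖(p : ℚ_[p]) ^ ν‖ = ((p:ℝ)^ν)⁻¹ := by
      rw [norm_pow, Padic.norm_p, inv_pow]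
    rw [norm_mul, norm_mul, norm_mul, hpν]
    calc ‖(i.choose ν : ℚ_[p])‖ * ((p:ℝ)^ν)⁻¹ * ‖(j : ℚ_[p]) ^ (i - ν)‖ * ‖μ ν‖
        ≤ 1 * ((p:ℝ)^ν)⁻¹ * 1 * ‖μ ν‖ := by
          gcongr <;> first | exact hc | exact hj' | positivity
      _ = ((p:ℝ)^ν)⁻¹ * ‖μ ν‖ := by ring
      _ ≤ ((p:ℝ) ^ (k/2 : ℕ))⁻¹ := by
          by_cases hν : ν ≤ k / 2
          · calc ((p:ℝ)^ν)⁻¹ * ‖μ ν‖ ≤ ((p:ℝ)^ν)⁻¹ * (p : ℝ) ^ (-((k / 2 - ν : ℕ) : ℤ)) := by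
                  gcongr <;> first | exact hμ2 ν hν | positivity
              _ = ((p:ℝ) ^ (k/2 : ℕ))⁻¹ := by
                  rw [zpow_neg, zpow_natCast, ← mul_inv, ← pow_add,
                    Nat.add_sub_cancel' hν]
          · calc ((p:ℝ)^ν)⁻¹ * ‖μ ν‖ ≤ ((p:ℝ)^ν)⁻¹ * 1 := by gcongr <;> first | exact hμ1 ν | positivity
              _ = ((p:ℝ)^ν)⁻¹ := mul_one _
              _ ≤ ((p:ℝ) ^ (k/2 : ℕ))⁻¹ := by
                  gcongr <;> first | exact le_of_lt hp | omega | positivity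
  calc (p:ℝ) ^ (k/2 : ℕ) * ‖_‖ ≤ (p:ℝ) ^ (k/2 : ℕ) * ((p:ℝ) ^ (k/2 : ℕ))⁻¹ := by gcongr
    _ = 1 := mul_inv_cancel₀ (by positivity)
end

section
/- Let Γ act on the Bruhat-Tits tree T, let V be a Q_p-vector space with left Γ-action, and let c : T_1 → V be a Γ-equivariant harmonic cocycle, i.e. c(γe) = γ·c(e), c(ē) = −c(e), and Σ_{s(e)=v} c(e) = 0 for each vertex v. Fix a vertex v_0 and define ψ(c) : Γ → V by ψ(c)(γ) = Σ_{e : v_0 → γv_0} c(e), the sum over the edges on the geodesic path from v_0 to γv_0. Then ψ(c) is a 1-cocycle: ψ(c)(γδ) = ψ(c)(γ) + γ·ψ(c)(δ) for all γ, δ ∈ Γ. -/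
/-- The sum of the values `c u w` of an (oriented-)edge function along a walk. -/
def walkSum {Vt W : Type*} [AddCommGroup W] {G : SimpleGraph Vt}
    (c : Vt → Vt → W) : {u v : Vt} → G.Walk u v → W
  | _, _, SimpleGraph.Walk.nil => 0
  | u, _, SimpleGraph.Walk.cons (v := w) _ q => c u w + walkSum c q

lemma walkSum_append {Vt W : Type*} [AddCommGroup W] {G : SimpleGraph Vt}
    (c : Vt → Vt → W) {u v w : Vt} (p : G.Walk u v) (q : G.Walk v w) :
    walkSum c (p.append q) = walkSum c p + walkSum c q := by
  induction p with
  | nil => simp [walkSum]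
  | cons h p ih => simp [walkSum, ih, add_assoc]

/-- let `Γ` act on a tree `G` (preserving adjacency) and linearly on a
`ℚ_p`-vector space `W`, and let `c` be a `Γ`-equivariant harmonic cocycle:
`c(γe) = γ·c(e)`, `c(ē) = -c(e)`, supported on edges, with `∑_{s(e)=v} c(e) = 0`.
Fix a base vertex `v₀` and a choice `P` of (geodesic) paths between vertices.  Then
`ψ(c) : γ ↦ ∑_{e : v₀ → γv₀} c(e)` is a 1-cocycle:
`ψ(c)(γδ) = ψ(c)(γ) + γ·ψ(c)(δ)`. -/
theorem stmt14 (p : ℕ) [Fact p.Prime] {Vt : Type*} {Γ : Type*} [Group Γ]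
    [MulAction Γ Vt] {W : Type*} [AddCommGroup W] [Module ℚ_[p] W]
    [DistribMulAction Γ W]
    (G : SimpleGraph Vt) (hG : G.IsTree)
    (hadj : ∀ (γ : Γ) (u v : Vt), G.Adj u v ↔ G.Adj (γ • u) (γ • v))
    (c : Vt → Vt → W)
    (hskew : ∀ u v : Vt, c u v = - c v u)
    (hequiv : ∀ (γ : Γ) (u v : Vt), c (γ • u) (γ • v) = γ • c u v)
    (hsupp : ∀ u v : Vt, ¬ G.Adj u v → c u v = 0)
    (hfin : ∀ v : Vt, {w : Vt | c v w ≠ 0}.Finite)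
    (hharm : ∀ v : Vt, ∑ᶠ w : Vt, c v w = 0)
    (v₀ : Vt) (P : ∀ u v : Vt, G.Walk u v) (hP : ∀ u v : Vt, (P u v).IsPath) :
    ∀ γ δ : Γ,
      walkSum c (P v₀ ((γ * δ) • v₀)) =
        walkSum c (P v₀ (γ • v₀)) + γ • walkSum c (P v₀ (δ • v₀)) := by
  classical
  -- uniqueness of paths in a tree
  have huniq : ∀ {a b : Vt} (q r : G.Walk a b), q.IsPath → r.IsPath → q = r := by
    intro a b q r hq hr
    obtain ⟨w, -, hw⟩ := hG.existsUnique_path a b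
    rw [hw q hq, hw r hr]
  set g : Vt → W := fun v => walkSum c (P v₀ v) with hg
  -- step lemma for adjacent vertices
  have hstep : ∀ u v : Vt, G.Adj u v → g v = g u + c u v := by
    intro u v h
    by_cases hv : v ∈ (P v₀ u).support
    · -- P v₀ u passes through v; it equals (P v₀ v) followed by the edge v→u
      have htake : ((P v₀ u).takeUntil v hv) = P v₀ v :=
        huniq _ _ ((hP v₀ u).takeUntil hv) (hP v₀ v)
      have hdrop : ((P v₀ u).dropUntil v hv) = SimpleGraph.Walk.cons h.symm .nil := by
        refine huniq _ _ ((hP v₀ u).dropUntil hv) ?_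
        simp [SimpleGraph.Walk.cons_isPath_iff, h.ne']
      have := congrArg (walkSum c) ((P v₀ u).take_spec hv)
      rw [walkSum_append, htake, hdrop] at this
      simp only [walkSum, add_zero] at this
      show walkSum c (P v₀ v) = walkSum c (P v₀ u) + c u v
      rw [← this, hskew v u]
      abel
    · -- extend P v₀ u by the edge u→v
      have hpath : ((P v₀ u).concat h).IsPath := by
        rw [← SimpleGraph.Walk.isPath_reverse_iff, SimpleGraph.Walk.reverse_concat]
        rw [SimpleGraph.Walk.cons_isPath_iff]
        exact ⟨(hP v₀ u).reverse, by simpa using hv⟩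
      have hcat : (P v₀ u).concat h = P v₀ v := huniq _ _ hpath (hP v₀ v)
      have := congrArg (walkSum c) hcat
      rw [SimpleGraph.Walk.concat_eq_append, walkSum_append] at this
      simp only [walkSum, add_zero] at this
      show walkSum c (P v₀ v) = walkSum c (P v₀ u) + c u v
      rw [← this]
  -- walkSum of any walk is a difference of g's
  have hwalk : ∀ {a b : Vt} (q : G.Walk a b), walkSum c q = g b - g a := by
    intro a b q
    induction q with
    | nil => simp [walkSum]
    | cons h q ih =>
      rw [walkSum, ih, hstep _ _ h]
      abel
  intro γ δ
  -- the γ-image of the walk P v₀ (δ • v₀)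
  let φ : G →g G := ⟨fun x => γ • x, fun h => (hadj γ _ _).mp h⟩
  have hmap : ∀ {a b : Vt} (q : G.Walk a b), walkSum c (q.map φ) = γ • walkSum c q := by
    intro a b q
    induction q with
    | nil => simp [walkSum]
    | cons h q ih =>
      rw [SimpleGraph.Walk.map_cons, walkSum, walkSum, ih, smul_add]
      congr 1
      exact hequiv γ _ _
  have h1 : walkSum c ((P v₀ (δ • v₀)).map φ) = g (γ • δ • v₀) - g (γ • v₀) := hwalk _
  rw [hmap] at h1
  have h2 : (γ * δ) • v₀ = γ • δ • v₀ := mul_smul γ δ v₀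
  show g ((γ * δ) • v₀) = g (γ • v₀) + γ • walkSum c (P v₀ (δ • v₀))
  rw [h2, h1]
  abel
end

section
/- Let Φ_0 be an arbitrary lift in A_k'(Γ, Z_p) of a p-adic automorphic U_p-eigenform φ with eigenvalue p^{k/2}, and set Φ_n = (Ũ_p)^n Φ_0 where Ũ_p = p^{−k/2} U_p. Then Φ_{n+1} − Φ_n takes values in F^n D_k(Z_p) for all n ≥ 0; i.e. for all g and all 1 ≤ i ≤ n, (Φ_{n+1} − Φ_n)(g)(x^{k+i}) ∈ p^{n−i+1} Z_p and (Φ_{n+1} − Φ_n)(g)(x^i) = 0 for 0 ≤ i ≤ k. -/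
/-- The matrices `α_j = [[p, j], [0, 1]]`. -/
noncomputable def alphaMat17 (p : ℕ) [Fact p.Prime] (j : ℕ) :
    Matrix (Fin 2) (Fin 2) ℚ_[p] :=
  !![(p : ℚ_[p]), (j : ℚ_[p]); 0, 1]

/-- The operator `Ũ_p = p^{-k/2} U_p` on distribution-valued automorphic forms, written
out on moment functions: `(Ũ_p Φ)(g)(x^i) = p^{-k/2} ∑_{j<p} ∑_{ν≤i} C(i,ν) p^ν j^{i-ν}
Φ(gα_j)(x^ν)`. -/
noncomputable def Utilde (p k : ℕ) [Fact p.Prime]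
    (Φ : Matrix (Fin 2) (Fin 2) ℚ_[p] → ℕ → ℚ_[p]) :
    Matrix (Fin 2) (Fin 2) ℚ_[p] → ℕ → ℚ_[p] :=
  fun g i => ((p : ℚ_[p]) ^ (k / 2))⁻¹ *
    ∑ j ∈ Finset.range p, ∑ ν ∈ Finset.range (i + 1),
      (i.choose ν : ℚ_[p]) * (p : ℚ_[p]) ^ ν * (j : ℚ_[p]) ^ (i - ν)
        * Φ (g * alphaMat17 p j) ν

lemma termBound17 {p : ℕ} [Fact p.Prime] (c y x : ℚ_[p]) (ν b E : ℕ)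
    (hc : ‖c‖ ≤ 1) (hy : ‖y‖ ≤ 1) (hx : ‖x‖ ≤ (p : ℝ) ^ (-(b : ℤ)))
    (hE : E ≤ ν + b) :
    ‖c * (p : ℚ_[p]) ^ ν * y * x‖ ≤ (p : ℝ) ^ (-(E : ℤ)) := by
  have hp1 : (1 : ℝ) < p := by exact_mod_cast (Fact.out : p.Prime).one_lt
  have hp0 : (0 : ℝ) < p := lt_trans one_pos hp1
  calc ‖c * (p : ℚ_[p]) ^ ν * y * x‖
      = ‖c‖ * ‖(p : ℚ_[p]) ^ ν‖ * ‖y‖ * ‖x‖ := by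
        rw [norm_mul, norm_mul, norm_mul]
    _ ≤ 1 * (p : ℝ) ^ (-(ν : ℤ)) * 1 * (p : ℝ) ^ (-(b : ℤ)) := by
        rw [Padic.norm_p_pow]
        gcongr
    _ = (p : ℝ) ^ (-(ν : ℤ) + -(b : ℤ)) := by
        rw [one_mul, mul_one, ← zpow_add₀ (ne_of_gt hp0)]
    _ ≤ (p : ℝ) ^ (-(E : ℤ)) := by
        apply zpow_le_zpow_right₀ (le_of_lt hp1)
        omega

lemma Utilde_apply17 (p k : ℕ) [Fact p.Prime]
    (Φ : Matrix (Fin 2) (Fin 2) ℚ_[p] → ℕ → ℚ_[p])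
    (g : Matrix (Fin 2) (Fin 2) ℚ_[p]) (i : ℕ) :
    Utilde p k Φ g i = ((p : ℚ_[p]) ^ (k / 2))⁻¹ *
      ∑ j ∈ Finset.range p, ∑ ν ∈ Finset.range (i + 1),
        (i.choose ν : ℚ_[p]) * (p : ℚ_[p]) ^ ν * (j : ℚ_[p]) ^ (i - ν)
          * Φ (g * alphaMat17 p j) ν := rfl

lemma natNorm17 {p : ℕ} [Fact p.Prime] (n : ℕ) : ‖(n : ℚ_[p])‖ ≤ 1 := by
  exact_mod_cast Padic.norm_int_le_one (n : ℤ)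

/-- let `Φ₀ ∈ A_k'(Γ, ℤ_p)` be any lift of a `U_p`-eigenform `φ` of
eigenvalue `p^{k/2}` (so `ρ(Φ₀)` is fixed by `Ũ_p`), and set `Φ_n = Ũ_p^n Φ₀`.  Then
`Φ_{n+1} - Φ_n` takes values in `F^n D_k(ℤ_p)`: its moments of index `≤ k` vanish, and
its `k+i`-th moments lie in `p^{n-i+1} ℤ_p` for `1 ≤ i ≤ n`. -/
theorem stmt17 (p k : ℕ) [Fact p.Prime] (hk : Even k)
    (Γ : Set (Matrix (Fin 2) (Fin 2) ℚ_[p])) (hΓ : ∀ γ ∈ Γ, γ.det = 1)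
    (Φ₀ : Matrix (Fin 2) (Fin 2) ℚ_[p] → ℕ → ℚ_[p])
    -- left ℚ_p^× Γ-invariance:
    (hinv : ∀ (u : ℚ_[p]) (γ g : Matrix (Fin 2) (Fin 2) ℚ_[p]),
      u ≠ 0 → γ ∈ Γ → Φ₀ (u • (γ * g)) = Φ₀ g)
    -- Φ₀ ∈ A_k'(Γ, ℤ_p): integral moments, with the low moments in V_k'(ℤ_p):
    (hint : ∀ g i, ‖Φ₀ g i‖ ≤ 1)
    (hV' : ∀ g, ∀ i ≤ k / 2, ‖Φ₀ g i‖ ≤ (p : ℝ) ^ (-((k / 2 - i : ℕ) : ℤ)))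
    -- ρ(Φ₀) = φ is a Ũ_p-fixed point, i.e. the moments of index ≤ k are preserved:
    (heig : ∀ g, ∀ i ≤ k, Utilde p k Φ₀ g i = Φ₀ g i) :
    ∀ (n : ℕ) (g : Matrix (Fin 2) (Fin 2) ℚ_[p]),
      (∀ i ≤ k, (Utilde p k)^[n + 1] Φ₀ g i = (Utilde p k)^[n] Φ₀ g i) ∧
      (∀ i, 1 ≤ i → i ≤ n →
        ‖(Utilde p k)^[n + 1] Φ₀ g (k + i) - (Utilde p k)^[n] Φ₀ g (k + i)‖
          ≤ (p : ℝ) ^ (-((n : ℤ) - i + 1))) := by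
  have hp1 : (1 : ℝ) < p := by exact_mod_cast (Fact.out : p.Prime).one_lt
  have hp0 : (0 : ℝ) < p := lt_trans one_pos hp1
  have hpne : ((p : ℚ_[p]) ^ (k / 2)) ≠ 0 := by
    apply pow_ne_zero
    exact_mod_cast (Fact.out : p.Prime).ne_zero
  have hcnorm : ‖((p : ℚ_[p]) ^ (k / 2))⁻¹‖ = (p : ℝ) ^ ((k / 2 : ℕ) : ℤ) := by
    rw [norm_inv, Padic.norm_p_pow, ← zpow_neg, neg_neg]
  -- Step 1: low moments are constant along the iteration
  have hlow : ∀ n g, ∀ i ≤ k, (Utilde p k)^[n] Φ₀ g i = Φ₀ g i := by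
    intro n
    induction n with
    | zero => intro g i _; rfl
    | succ n ih =>
      intro g i hi
      rw [Function.iterate_succ_apply']
      have : Utilde p k ((Utilde p k)^[n] Φ₀) g i = Utilde p k Φ₀ g i := by
        rw [Utilde_apply17, Utilde_apply17]
        congr 1
        refine Finset.sum_congr rfl fun j _ => Finset.sum_congr rfl fun ν hν => ?_
        rw [ih _ ν (by simp at hν; omega)]
      rw [this, heig g i hi]
  -- Step 2: all moments stay integral along the iteration
  have hbdd : ∀ n g i, ‖(Utilde p k)^[n] Φ₀ g i‖ ≤ 1 := by
    intro n
    induction n with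
    | zero => exact hint
    | succ n ih =>
      intro g i
      rw [Function.iterate_succ_apply', Utilde_apply17, norm_mul, hcnorm]
      have hsum : ‖∑ j ∈ Finset.range p, ∑ ν ∈ Finset.range (i + 1),
          (i.choose ν : ℚ_[p]) * (p : ℚ_[p]) ^ ν * (j : ℚ_[p]) ^ (i - ν)
            * (Utilde p k)^[n] Φ₀ (g * alphaMat17 p j) ν‖
          ≤ (p : ℝ) ^ (-((k / 2 : ℕ) : ℤ)) := by
        apply IsUltrametricDist.norm_sum_le_of_forall_le_of_nonneg (by positivity)
        intro j _
        apply IsUltrametricDist.norm_sum_le_of_forall_le_of_nonneg (by positivity)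
        intro ν hν
        by_cases hcase : ν ≤ k / 2
        · have hx : ‖(Utilde p k)^[n] Φ₀ (g * alphaMat17 p j) ν‖
              ≤ (p : ℝ) ^ (-((k / 2 - ν : ℕ) : ℤ)) := by
            rw [hlow n _ ν (by omega)]
            exact hV' _ ν hcase
          exact termBound17 _ _ _ _ _ _ (natNorm17 _)
            ((by rw [norm_pow]; exact pow_le_one₀ (norm_nonneg _) (natNorm17 j))) hx (by omega)
        · have hx : ‖(Utilde p k)^[n] Φ₀ (g * alphaMat17 p j) ν‖
              ≤ (p : ℝ) ^ (-((0 : ℕ) : ℤ)) := by simpa using ih _ ν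
          exact termBound17 _ _ _ _ _ _ (natNorm17 _)
            ((by rw [norm_pow]; exact pow_le_one₀ (norm_nonneg _) (natNorm17 j))) hx (by omega)
      refine le_trans (mul_le_mul_of_nonneg_left hsum (by positivity)) ?_
      rw [← zpow_add₀ (ne_of_gt hp0)]
      simp
  -- Step 3: the filtration estimate on successive differences
  have hdiff : ∀ n g, ∀ i, 1 ≤ i →
      ‖(Utilde p k)^[n + 1] Φ₀ g (k + i) - (Utilde p k)^[n] Φ₀ g (k + i)‖
        ≤ (p : ℝ) ^ (-((n + 1 - i : ℕ) : ℤ)) := by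
    intro n
    induction n with
    | zero =>
      intro g i hi
      have h1 : (1 - i : ℕ) = 0 := by omega
      rw [h1]
      have := IsUltrametricDist.norm_add_le_max ((Utilde p k)^[1] Φ₀ g (k + i))
        (-(Utilde p k)^[0] Φ₀ g (k + i))
      rw [← sub_eq_add_neg, norm_neg] at this
      refine this.trans ?_
      simpa using max_le (hbdd 1 g (k + i)) (hbdd 0 g (k + i))
    | succ n ih =>
      intro g i hi
      have hsub : ∀ (Φ Ψ : Matrix (Fin 2) (Fin 2) ℚ_[p] → ℕ → ℚ_[p]) (g : _) (m : ℕ),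
          Utilde p k Φ g m - Utilde p k Ψ g m
            = ((p : ℚ_[p]) ^ (k / 2))⁻¹ *
              ∑ j ∈ Finset.range p, ∑ ν ∈ Finset.range (m + 1),
                (m.choose ν : ℚ_[p]) * (p : ℚ_[p]) ^ ν * (j : ℚ_[p]) ^ (m - ν)
                  * (Φ (g * alphaMat17 p j) ν - Ψ (g * alphaMat17 p j) ν) := by
        intro Φ Ψ g m
        rw [Utilde_apply17, Utilde_apply17, ← mul_sub, ← Finset.sum_sub_distrib]
        congr 1
        refine Finset.sum_congr rfl fun j _ => ?_
        rw [← Finset.sum_sub_distrib]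
        exact Finset.sum_congr rfl fun ν _ => (mul_sub _ _ _).symm
      have e2 : (Utilde p k)^[n + 1 + 1] Φ₀ = Utilde p k ((Utilde p k)^[n + 1] Φ₀) :=
        Function.iterate_succ_apply' _ _ _
      have e1 : (Utilde p k)^[n + 1] Φ₀ = Utilde p k ((Utilde p k)^[n] Φ₀) :=
        Function.iterate_succ_apply' _ _ _
      rw [e2, e1, hsub, norm_mul, hcnorm]
      have hsum : ‖∑ j ∈ Finset.range p, ∑ ν ∈ Finset.range (k + i + 1),
          ((k + i).choose ν : ℚ_[p]) * (p : ℚ_[p]) ^ ν * (j : ℚ_[p]) ^ (k + i - ν)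
            * (Utilde p k ((Utilde p k)^[n] Φ₀) (g * alphaMat17 p j) ν
              - (Utilde p k)^[n] Φ₀ (g * alphaMat17 p j) ν)‖
          ≤ (p : ℝ) ^ (-((k / 2 + (n + 2 - i) : ℕ) : ℤ)) := by
        apply IsUltrametricDist.norm_sum_le_of_forall_le_of_nonneg (by positivity)
        intro j _
        apply IsUltrametricDist.norm_sum_le_of_forall_le_of_nonneg (by positivity)
        intro ν hν
        rw [Finset.mem_range] at hν
        by_cases hcase : ν ≤ k
        · have hz : Utilde p k ((Utilde p k)^[n] Φ₀) (g * alphaMat17 p j) ν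
              - (Utilde p k)^[n] Φ₀ (g * alphaMat17 p j) ν = 0 := by
            rw [← e1, hlow (n + 1) _ ν hcase,
              hlow n _ ν hcase, sub_self]
          rw [hz, mul_zero, norm_zero]
          positivity
        · obtain ⟨m, hm1, hmi, rfl⟩ : ∃ m, 1 ≤ m ∧ m ≤ i ∧ ν = k + m :=
            ⟨ν - k, by omega, by omega, by omega⟩
          have hx : ‖Utilde p k ((Utilde p k)^[n] Φ₀) (g * alphaMat17 p j) (k + m)
              - (Utilde p k)^[n] Φ₀ (g * alphaMat17 p j) (k + m)‖
              ≤ (p : ℝ) ^ (-((n + 1 - m : ℕ) : ℤ)) := by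
            rw [← e1]
            exact ih _ m hm1
          exact termBound17 _ _ _ _ _ _ (natNorm17 _)
            ((by rw [norm_pow]; exact pow_le_one₀ (norm_nonneg _) (natNorm17 j))) hx (by omega)
      refine le_trans (mul_le_mul_of_nonneg_left hsum (by positivity)) ?_
      rw [← zpow_add₀ (ne_of_gt hp0)]
      apply zpow_le_zpow_right₀ (le_of_lt hp1)
      push_cast
      omega
  intro n g
  constructor
  · intro i hi
    rw [hlow (n+1) g i hi, hlow n g i hi]
  · intro i hi1 hin
    have := hdiff n g i hi1
    refine this.trans (le_of_eq ?_)
    congr 1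
    push_cast [Nat.cast_sub (by omega : i ≤ n + 1)]
    ring
end

section
/- The restriction of the specialization map ρ from rigid-analytic automorphic forms to p-adic automorphic forms of weight k is injective on the p^{k/2}-eigenspace of U_p: if Φ ∈ A_k(Γ, Z_p) satisfies U_p Φ = p^{k/2} Φ and all moments Φ(g)(x^i) vanish for 0 ≤ i ≤ k and all g, then Φ = 0. -/
/-- The matrices `α_j = [[p, j], [0, 1]]`. -/
noncomputable def alphaMat18 (p : ℕ) [Fact p.Prime] (j : ℕ) :
    Matrix (Fin 2) (Fin 2) ℚ_[p] :=
  !![(p : ℚ_[p]), (j : ℚ_[p]); 0, 1]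

/-- injectivity of the specialization map on the `p^{k/2}`-eigenspace of
`U_p`.  A rigid-analytic automorphic form `Φ ∈ A_k(Γ, ℤ_p)` is encoded by its moment
functions `Φ g i = Φ(g)(x^i) ∈ ℤ_p`; the `U_p`-eigenvalue equation reads, via the explicit
moment formula for `U_p`,
`p^{k/2} Φ(g)(x^i) = ∑_{j<p} ∑_{ν≤i} C(i,ν) p^ν j^{i-ν} Φ(gα_j)(x^ν)`.
If moreover all moments `Φ(g)(x^i)` with `i ≤ k` vanish (i.e. `Φ ∈ ker ρ`), then `Φ = 0`. -/
theorem stmt18 (p k : ℕ) [Fact p.Prime] (hk : Even k)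
    (Γ : Set (Matrix (Fin 2) (Fin 2) ℚ_[p])) (hΓ : ∀ γ ∈ Γ, γ.det = 1)
    (Φ : Matrix (Fin 2) (Fin 2) ℚ_[p] → ℕ → ℚ_[p])
    -- Φ takes values in D_k(ℤ_p):
    (hint : ∀ g i, ‖Φ g i‖ ≤ 1)
    -- left ℚ_p^× Γ-invariance:
    (hinv : ∀ (u : ℚ_[p]) (γ g : Matrix (Fin 2) (Fin 2) ℚ_[p]),
      u ≠ 0 → γ ∈ Γ → Φ (u • (γ * g)) = Φ g)
    -- U_p Φ = p^{k/2} Φ, written out on moments: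
    (heig : ∀ g i, (p : ℚ_[p]) ^ (k / 2) * Φ g i =
      ∑ j ∈ Finset.range p, ∑ ν ∈ Finset.range (i + 1),
        (i.choose ν : ℚ_[p]) * (p : ℚ_[p]) ^ ν * (j : ℚ_[p]) ^ (i - ν)
          * Φ (g * alphaMat18 p j) ν)
    -- Φ lies in the kernel of the specialization map ρ:
    (hlow : ∀ g, ∀ i ≤ k, Φ g i = 0) :
    ∀ g i, Φ g i = 0 := by
  have hp1 : (1 : ℝ) < p := by exact_mod_cast (Fact.out : p.Prime).one_lt
  have hp0 : (0 : ℝ) < p := lt_trans one_pos hp1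
  -- Key claim: Φ takes values in the filtration step F^n for every n.
  have key : ∀ n : ℕ, ∀ g m, ‖Φ g (k + m + 1)‖ ≤ (p : ℝ) ^ ((m : ℤ) - n) := by
    intro n
    induction n with
    | zero =>
      intro g m
      refine (hint _ _).trans ?_
      rw [Nat.cast_zero, sub_zero, zpow_natCast]
      exact one_le_pow₀ hp1.le
    | succ n ih =>
      intro g m
      have h := heig g (k + m + 1)
      have hbound : ‖(p : ℚ_[p]) ^ (k / 2) * Φ g (k + m + 1)‖
          ≤ (p : ℝ) ^ (-(k : ℤ) - 1 - n) := by
        rw [h]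
        refine IsUltrametricDist.norm_sum_le_of_forall_le_of_nonneg
          (by positivity) fun j _ => ?_
        refine IsUltrametricDist.norm_sum_le_of_forall_le_of_nonneg
          (by positivity) fun ν hν => ?_
        rcases le_or_gt ν k with hle | hgt
        · rw [hlow _ ν hle, mul_zero, norm_zero]
          positivity
        · obtain ⟨μ, rfl⟩ : ∃ μ, ν = k + μ + 1 := ⟨ν - k - 1, by omega⟩
          have hμm : μ ≤ m := by
            have := Finset.mem_range.mp hν; omega
          rw [norm_mul, norm_mul, norm_mul]
          have h1 : ‖(((k + m + 1).choose (k + μ + 1) : ℕ) : ℚ_[p])‖ ≤ 1 := by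
            exact_mod_cast Padic.norm_int_le_one
              (((k + m + 1).choose (k + μ + 1) : ℤ))
          have h2 : ‖(p : ℚ_[p]) ^ (k + μ + 1)‖ = (p : ℝ) ^ (-((k : ℤ) + μ + 1)) := by
            simpa using Padic.norm_p_pow (p := p) (k + μ + 1)
          have h3 : ‖((j : ℕ) : ℚ_[p]) ^ (k + m + 1 - (k + μ + 1))‖ ≤ 1 := by
            rw [norm_pow]
            refine pow_le_one₀ (norm_nonneg _) ?_
            exact_mod_cast Padic.norm_int_le_one ((j : ℤ))
          have h4 : ‖Φ (g * alphaMat18 p j) (k + μ + 1)‖ ≤ (p : ℝ) ^ ((μ : ℤ) - n) :=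
            ih _ μ
          calc ‖(((k + m + 1).choose (k + μ + 1) : ℕ) : ℚ_[p])‖
                * ‖(p : ℚ_[p]) ^ (k + μ + 1)‖
                * ‖((j : ℕ) : ℚ_[p]) ^ (k + m + 1 - (k + μ + 1))‖
                * ‖Φ (g * alphaMat18 p j) (k + μ + 1)‖
              ≤ 1 * ((p : ℝ) ^ (-((k : ℤ) + μ + 1))) * 1 * ((p : ℝ) ^ ((μ : ℤ) - n)) := by
                gcongr <;> first
                  | exact h1
                  | exact h2.le
                  | exact h3
                  | exact h4
                  | positivity
            _ = (p : ℝ) ^ (-(k : ℤ) - 1 - n) := by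
                rw [one_mul, mul_one, ← zpow_add₀ (ne_of_gt hp0)]
                ring_nf
      -- divide by the unit p^{k/2}
      have hnorm : ‖(p : ℚ_[p]) ^ (k / 2)‖ = (p : ℝ) ^ (-((k / 2 : ℕ) : ℤ)) :=
        Padic.norm_p_pow _
      have hΦ : ‖Φ g (k + m + 1)‖
          ≤ (p : ℝ) ^ (((k / 2 : ℕ) : ℤ) - (k : ℤ) - 1 - n) := by
        have hne : (0 : ℝ) < (p : ℝ) ^ (-((k / 2 : ℕ) : ℤ)) := by positivity
        rw [norm_mul, hnorm] at hbound
        have h' : ‖Φ g (k + m + 1)‖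
            ≤ (p : ℝ) ^ (-(k : ℤ) - 1 - n) / (p : ℝ) ^ (-((k / 2 : ℕ) : ℤ)) :=
          (le_div_iff₀' hne).mpr hbound
        refine h'.trans_eq ?_
        rw [div_eq_mul_inv, ← zpow_neg, ← zpow_add₀ (ne_of_gt hp0)]
        ring_nf
      refine hΦ.trans ?_
      have hexp : ((k / 2 : ℕ) : ℤ) - (k : ℤ) - 1 - n ≤ (m : ℤ) - (n + 1 : ℕ) := by
        have : (k / 2 : ℕ) ≤ k := Nat.div_le_self _ _
        push_cast
        omega
      exact zpow_le_zpow_right₀ hp1.le hexp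
  -- conclude
  intro g i
  rcases le_or_gt i k with hle | hgt
  · exact hlow g i hle
  · obtain ⟨m, rfl⟩ : ∃ m, i = k + m + 1 := ⟨i - k - 1, by omega⟩
    by_contra hne
    have hpos : 0 < ‖Φ g (k + m + 1)‖ := norm_pos_iff.mpr hne
    obtain ⟨n, hn⟩ := pow_unbounded_of_one_lt ((p : ℝ) ^ m / ‖Φ g (k + m + 1)‖) hp1
    have hlt : (p : ℝ) ^ ((m : ℤ) - n) < ‖Φ g (k + m + 1)‖ := by
      rw [zpow_sub₀ (ne_of_gt hp0), zpow_natCast, zpow_natCast]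
      rw [div_lt_iff₀ (by positivity)]
      rw [div_lt_iff₀ hpos] at hn
      linarith [hn]
    exact absurd (key n g m) (not_le.mpr hlt)
end
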